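/- arXiv:1302.0769 — 6 statements merged into one kernel-verified Lean document; each statement's English description precedes it below -/
import Mathlib

section
/- Let K be a field, M ⊆ ℤ^m an affine monoid, and let x, y ∈ M be noninvertible elements with x ≠ y. Then the ideal of K[M] generated by the binomial X^x − X^y is a prime ideal if and only if both of the following hold: (a) X^x, X^y is a K[M]-sequence; (b) the quotient group gp(M)/ℤ(x−y) is torsionfree, i.e., for every z ∈ gp(M) and every integer n > 0 such that n·z is an integer multiple of x − y, z itself is an integer multiple of x − y. -/
open AddMonoidAlgebra

set_option maxHeartbeats 1000000

lemma mapDomain_eq_zero_mem_span {α β K : Type*} [Field K] (φ : α → β) (g : α →₀ K)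
    (hg : Finsupp.mapDomain φ g = 0) :
    g ∈ Submodule.span K {h : α →₀ K | ∃ a b, φ a = φ b ∧ h = Finsupp.single a 1 - Finsupp.single b 1} := by
  classical
  set D := {h : α →₀ K | ∃ a b, φ a = φ b ∧ h = Finsupp.single a 1 - Finsupp.single b 1}
  generalize hn : g.support.card = n
  induction n using Nat.strong_induction_on generalizing g with
  | _ n ih =>
    rcases eq_or_ne g 0 with rfl | hg0
    · exact Submodule.zero_mem _
    obtain ⟨a, ha⟩ := Finsupp.support_nonempty_iff.mpr hg0
    have happ : ∀ q, Finsupp.mapDomain φ g q = ∑ c ∈ g.support, (if φ c = q then g c else 0) := by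
      intro q
      rw [Finsupp.mapDomain, Finsupp.sum_apply, Finsupp.sum]
      exact Finset.sum_congr rfl fun c _ => Finsupp.single_apply
    have hsum : ∑ c ∈ g.support, (if φ c = φ a then g c else 0) = 0 := by
      rw [← happ, hg]; rfl
    have hb : ∃ b ∈ g.support, b ≠ a ∧ φ b = φ a := by
      by_contra hcon
      push_neg at hcon
      have : ∑ c ∈ g.support, (if φ c = φ a then g c else 0) = g a := by
        have hh := Finset.sum_eq_single (s := g.support)
          (f := fun c => if φ c = φ a then g c else 0) a
          (fun c hc hca => if_neg (hcon c hc hca)) (fun h => absurd ha h)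
        simpa using hh
      rw [this] at hsum
      exact (Finsupp.mem_support_iff.mp ha) hsum
    obtain ⟨b, hbs, hba, hφba⟩ := hb
    set e : α →₀ K := Finsupp.single a 1 - Finsupp.single b 1 with he
    have heD : e ∈ D := ⟨a, b, hφba.symm, rfl⟩
    set g' := g - g a • e with hg'
    have hg'app : ∀ c, g' c = g c - g a * (Finsupp.single a 1 c - Finsupp.single b 1 c) := by
      intro c; simp [hg', he, mul_sub]
    have hg'a : g' a = 0 := by
      rw [hg'app]; simp [Finsupp.single_apply, hba]
    have hsupp : g'.support ⊆ g.support.erase a := by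
      intro c hc
      have hc0 : g' c ≠ 0 := Finsupp.mem_support_iff.mp hc
      have hca : c ≠ a := fun h => hc0 (h ▸ hg'a)
      refine Finset.mem_erase.mpr ⟨hca, Finsupp.mem_support_iff.mpr fun hgc => ?_⟩
      rcases eq_or_ne c b with rfl | hcb
      · exact (Finsupp.mem_support_iff.mp hbs) hgc
      · apply hc0
        rw [hg'app]
        simp [Finsupp.single_apply, Ne.symm hca, Ne.symm hcb, hgc]
    have hmap' : Finsupp.mapDomain φ g' = 0 := by
      have h1 : Finsupp.mapDomain φ e = (0 : β →₀ K) := by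
        have hs := map_sub (Finsupp.lmapDomain K K φ) (Finsupp.single a (1:K)) (Finsupp.single b 1)
        simp only [Finsupp.lmapDomain_apply] at hs
        rw [he, hs, Finsupp.mapDomain_single, Finsupp.mapDomain_single, hφba, sub_self]
      have h2 := map_sub (Finsupp.lmapDomain K K φ) g (g a • e)
      simp only [Finsupp.lmapDomain_apply] at h2
      rw [hg', h2, hg, Finsupp.mapDomain_smul, h1, smul_zero, sub_zero]
    have hcard : g'.support.card < n := by
      calc g'.support.card ≤ (g.support.erase a).card := Finset.card_le_card hsupp
        _ < g.support.card := Finset.card_erase_lt_of_mem ha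
        _ = n := hn
    have := ih _ hcard g' hmap' rfl
    have hgeq : g = g' + g a • e := by rw [hg']; abel
    rw [hgeq]
    exact Submodule.add_mem _ this (Submodule.smul_mem _ _ (Submodule.subset_span heD))

lemma mem_span_int_diff {G : Type*} [AddCommGroup G] (M : AddSubmonoid G) {z : G}
    (hz : z ∈ Submodule.span ℤ (M : Set G)) : ∃ u ∈ M, ∃ v ∈ M, z = u - v := by
  let S : AddSubgroup G :=
    { carrier := {z | ∃ u ∈ M, ∃ v ∈ M, z = u - v}
      zero_mem' := ⟨0, M.zero_mem, 0, M.zero_mem, by simp⟩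
      add_mem' := by
        rintro _ _ ⟨u, hu, v, hv, rfl⟩ ⟨u', hu', v', hv', rfl⟩
        exact ⟨u + u', M.add_mem hu hu', v + v', M.add_mem hv hv', by abel⟩
      neg_mem' := by
        rintro _ ⟨u, hu, v, hv, rfl⟩
        exact ⟨v, hv, u, hu, by abel⟩ }
  have hle : Submodule.span ℤ (M : Set G) ≤ AddSubgroup.toIntSubmodule S :=
    Submodule.span_le.mpr fun a ha => ⟨a, ha, 0, M.zero_mem, by simp⟩
  exact hle hz

lemma pow_sub_pow_mem {R : Type*} [CommRing R] (a b : R) (n : ℕ) :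
    a ^ n - b ^ n ∈ Ideal.span {a - b} :=
  Ideal.mem_span_singleton'.mpr ⟨∑ i ∈ Finset.range n, a ^ i * b ^ (n - 1 - i), geom_sum₂_mul a b n⟩

/-- A sequence `fs = [f₁, …, fᵣ]` of elements of a commutative ring `R` is an `R`-sequence
(regular sequence): `(f₁, …, fᵣ) ≠ R` and each `fᵢ` is a non-zerodivisor modulo
`(f₁, …, f_{i−1})`. -/
def IsRegSeq {R : Type*} [CommRing R] (fs : List R) : Prop :=
  Ideal.span {f | f ∈ fs} ≠ ⊤ ∧
  ∀ i : Fin fs.length, ∀ r : R,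
    fs.get i * r ∈ Ideal.span {f | f ∈ fs.take i.val} →
      r ∈ Ideal.span {f | f ∈ fs.take i.val}

/-- **Theorem (Bruns–Gubeladze, binomial prime criterion).**
Let `K` be a field, `M ⊆ ℤ^m` an affine monoid (a finitely generated submonoid), and
`x ≠ y` noninvertible elements of `M`.  The ideal of `K[M]` generated by `X^x − X^y` is
prime if and only if (a) `X^x, X^y` is a `K[M]`-sequence, and (b) `gp(M)/ℤ(x−y)` is
torsionfree, i.e. whenever `z ∈ gp(M)` and `n > 0` satisfy that `n • z` is an integer
multiple of `x − y`, then `z` itself is an integer multiple of `x − y`. -/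
theorem binomial_prime_iff {m : ℕ} (K : Type*) [Field K]
    (M : AddSubmonoid (Fin m → ℤ)) (hMfg : M.FG)
    (x y : M) (hx : -(x : Fin m → ℤ) ∉ M) (hy : -(y : Fin m → ℤ) ∉ M) (hxy : x ≠ y) :
    (Ideal.span {(single x 1 : AddMonoidAlgebra K M) - single y 1}).IsPrime ↔
      (IsRegSeq [(single x 1 : AddMonoidAlgebra K M), single y 1] ∧
        ∀ z ∈ Submodule.span ℤ (M : Set (Fin m → ℤ)), ∀ n : ℕ, 0 < n →
          (∃ a : ℤ, (n : ℤ) • z = a • ((x : Fin m → ℤ) - (y : Fin m → ℤ))) →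
          ∃ b : ℤ, z = b • ((x : Fin m → ℤ) - (y : Fin m → ℤ))) := by
  classical
  set A := AddMonoidAlgebra K M with hA
  set Xx : A := single x 1 with hXx
  set Xy : A := single y 1 with hXy
  set f : A := Xx - Xy with hf
  set I : Ideal A := Ideal.span {f} with hI
  -- no zero divisors in A
  haveI : UniqueSums M :=
    UniqueSums.of_injective_addHom M.subtype.toAddHom Subtype.coe_injective inferInstance
  haveI : NoZeroDivisors A := by unfold A; infer_instance
  have hXx0 : Xx ≠ 0 := fun h => one_ne_zero (AddMonoidAlgebra.single_eq_zero.mp h)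
  have hXy0 : Xy ≠ 0 := fun h => one_ne_zero (AddMonoidAlgebra.single_eq_zero.mp h)
  have hf0 : f ≠ 0 := by
    rw [hf, sub_ne_zero]
    intro h
    rcases AddMonoidAlgebra.single_inj.mp h with ⟨h1, _⟩ | ⟨h1, _⟩
    · exact hxy h1
    · exact one_ne_zero h1
  have hfI : f ∈ I := Ideal.subset_span rfl
  -- list/set conversions
  have hset2 : {g | g ∈ [Xx, Xy]} = ({Xx, Xy} : Set A) := by
    ext g; simp [List.mem_cons]
  have hset1 : {g | g ∈ [Xx, Xy].take 1} = ({Xx} : Set A) := by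
    ext g; simp [List.take, List.mem_cons]
  have hset0 : {g | g ∈ ([] : List A)} = (∅ : Set A) := by
    ext g; simp
  have hset1' : {g | g ∈ [Xx]} = ({Xx} : Set A) := by
    ext g; simp
  constructor
  · -- forward direction
    intro hprime
    set q : A →+* A ⧸ I := Ideal.Quotient.mk I with hq'
    haveI hdom : IsDomain (A ⧸ I) := Ideal.Quotient.isDomain I
    set ε : A →ₐ[K] K := (AddMonoidAlgebra.lift K K M) 1 with hε
    have hεs : ∀ a : M, ε (single a 1) = 1 := by
      intro a
      rw [hε, AddMonoidAlgebra.lift_single]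
      simp
    have hXxI : Xx ∉ I := by
      intro h
      obtain ⟨c, hc⟩ := Ideal.mem_span_singleton'.mp h
      have h1 := congrArg ε hc
      rw [map_mul] at h1
      have h2 : ε f = 0 := by rw [hf, map_sub, hXx, hXy, hεs, hεs, sub_self]
      rw [h2, mul_zero, hXx, hεs] at h1
      exact one_ne_zero h1.symm
    have hq : q Xx = q Xy := Ideal.Quotient.eq.mpr (by rw [← hf]; exact hfI)
    have hqx0 : q Xx ≠ 0 := fun h => hXxI (Ideal.Quotient.eq_zero_iff_mem.mp h)
    have hqy0 : q Xy ≠ 0 := by rw [← hq]; exact hqx0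
    constructor
    · -- regular sequence
      constructor
      · -- span ≠ ⊤
        rw [hset2]
        intro htop
        have h1 : (1 : A) ∈ Ideal.span {Xx, Xy} := htop ▸ Submodule.mem_top
        obtain ⟨a, b, hab⟩ := Ideal.mem_span_pair.mp h1
        set c0 : A →ₗ[K] K := (Finsupp.lapply (0 : M)).comp (AddMonoidAlgebra.coeffLinearEquiv K).toLinearMap with hc0
        have hcoef : ∀ (w : M) (g : A), -(w : Fin m → ℤ) ∉ M → c0 (g * single w 1) = 0 := by
          intro w g hw
          have hns : (0 : M) ∉ (g * single w 1 : A).coeff.support := by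
            intro hsup
            have hmem := AddMonoidAlgebra.support_coeff_mul_subset g (single w 1) hsup
            rw [Finset.mem_add] at hmem
            obtain ⟨c, hc, d, hd, hcd⟩ := hmem
            have hd' : d = w := Finset.mem_singleton.mp (Finsupp.support_single_subset hd)
            apply hw
            have hcw : (c : Fin m → ℤ) + w = 0 := by
              rw [← hd']
              have hval := congrArg (Subtype.val) hcd
              push_cast at hval
              exact hval
            have hwc : -(w : Fin m → ℤ) = c := by
              rw [neg_eq_iff_add_eq_zero, add_comm]
              exact hcw
            rw [hwc]
            exact c.2
          show (g * single w 1 : A).coeff 0 = 0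
          exact Finsupp.notMem_support_iff.mp hns
        have h0 := congrArg c0 hab
        rw [map_add, hXx, hXy, hcoef x a hx, hcoef y b hy, add_zero] at h0
        have hone : c0 (1 : A) = 1 := by
          show (1 : A).coeff 0 = 1; rw [AddMonoidAlgebra.one_def]
          exact Finsupp.single_eq_same
        rw [hone] at h0
        exact one_ne_zero h0.symm
      · -- regularity conditions
        intro i r
        rcases i with ⟨iv, hiv⟩
        rcases iv with _ | _ | iv
        · change Xx * r ∈ Ideal.span {g | g ∈ ([] : List A)} →
            r ∈ Ideal.span {g | g ∈ ([] : List A)}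
          rw [hset0, Ideal.span_empty]
          intro h
          have h2 : Xx * r = 0 := (Submodule.mem_bot A).mp h
          rcases mul_eq_zero.mp h2 with h3 | h3
          · exact absurd h3 hXx0
          · exact (Submodule.mem_bot A).mpr h3
        · change Xy * r ∈ Ideal.span {g | g ∈ [Xx]} → r ∈ Ideal.span {g | g ∈ [Xx]}
          rw [hset1']
          intro hyr
          obtain ⟨s, hs⟩ := Ideal.mem_span_singleton'.mp hyr
          have h1 : Xx * (r - s) ∈ I := by
            have heq : Xx * (r - s) = f * r := by rw [hf]; linear_combination -hs
            rw [heq]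
            exact I.mul_mem_right r hfI
          rcases hprime.mem_or_mem h1 with h | h
          · exact absurd h hXxI
          · obtain ⟨t, ht⟩ := Ideal.mem_span_singleton'.mp h
            rw [hf] at ht
            have h2 : f * (r - Xx * t) = 0 := by
              rw [hf]; linear_combination (-Xx) * ht + hs
            rcases mul_eq_zero.mp h2 with h3 | h3
            · exact absurd h3 hf0
            · rw [sub_eq_zero] at h3
              exact Ideal.mem_span_singleton'.mpr ⟨t, by linear_combination -h3⟩
        · exfalso
          simp only [List.length] at hiv
          omega
    · -- torsion-freeness
      set Qh := (Fin m → ℤ) ⧸ Submodule.span ℤ {(x : Fin m → ℤ) - y} with hQh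
      let ψ : M →+ Qh :=
        AddMonoidHom.comp (Submodule.mkQ (Submodule.span ℤ {(x : Fin m → ℤ) - y})).toAddMonoidHom
          M.subtype
      let Ψ : A →+* AddMonoidAlgebra K Qh := AddMonoidAlgebra.mapDomainRingHom K ψ
      have hΨs : ∀ a : M, Ψ (single a 1) = single (ψ a) 1 := by
        intro a
        show AddMonoidAlgebra.mapDomain ψ (single a 1) = single (ψ a) 1
        exact AddMonoidAlgebra.mapDomain_single
      have hψm : ∀ a : M, ψ a = Submodule.Quotient.mk (a : Fin m → ℤ) := fun a => rfl
      have hψxy : ψ x = ψ y := by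
        rw [hψm, hψm]
        exact (Submodule.Quotient.eq _).mpr (Submodule.subset_span rfl)
      have hΨf : Ψ f = 0 := by
        rw [hf, map_sub, hXx, hXy, hΨs, hΨs, hψxy, sub_self]
      have hΨI : ∀ g ∈ I, Ψ g = 0 := by
        intro g hg
        obtain ⟨c, hc⟩ := Ideal.mem_span_singleton'.mp hg
        rw [← hc, map_mul, hΨf, mul_zero]
      -- main induction
      have key : ∀ n : ℕ, 0 < n → ∀ z ∈ Submodule.span ℤ (M : Set (Fin m → ℤ)),
          (∃ a : ℤ, (n : ℤ) • z = a • ((x : Fin m → ℤ) - y)) →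
          ∃ b : ℤ, z = b • ((x : Fin m → ℤ) - y) := by
        intro n
        induction n using Nat.strong_induction_on with
        | _ n ih =>
          intro hn z hz hex
          obtain ⟨u, hu, v, hv, rfl⟩ := mem_span_int_diff M hz
          obtain ⟨a, ha⟩ := hex
          set u' : M := ⟨u, hu⟩ with hu'
          set v' : M := ⟨v, hv⟩ with hv'
          -- step 1: Xu^n - Xv^n ∈ I
          have hcore : ∀ w1 w2 : M, q (single w1 1 : A) = q (single w2 1) →
              q (single w1 1 : A) ≠ 0 → ∀ p : ℕ, n • u' + p • w1 = n • v' + p • w2 →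
              (single u' 1 : A) ^ n - (single v' 1 : A) ^ n ∈ I := by
            intro w1 w2 hw hw0 p hpe
            have h1 : (single (n • u' + p • w1) 1 : A) = single (n • v' + p • w2) 1 := by rw [hpe]
            have h2 : (single u' 1 : A) ^ n * (single w1 1 : A) ^ p
                = (single v' 1 : A) ^ n * (single w2 1 : A) ^ p := by
              rw [AddMonoidAlgebra.single_pow, AddMonoidAlgebra.single_pow,
                AddMonoidAlgebra.single_pow, AddMonoidAlgebra.single_pow,
                AddMonoidAlgebra.single_mul_single, AddMonoidAlgebra.single_mul_single,
                one_pow, one_pow, one_mul]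
              exact h1
            have h3 : q ((single u' 1 : A)) ^ n * q ((single w1 1 : A)) ^ p
                = q ((single v' 1 : A)) ^ n * q ((single w1 1 : A)) ^ p := by
              have h4 := congrArg q h2
              rw [map_mul, map_mul, map_pow, map_pow, map_pow, map_pow, hw] at h4
              rw [hw]
              exact h4
            have h5 := mul_right_cancel₀ (pow_ne_zero p hw0) h3
            have h6 : q ((single u' 1 : A) ^ n - (single v' 1 : A) ^ n) = 0 := by
              rw [map_sub, map_pow, map_pow, h5, sub_self]
            exact Ideal.Quotient.eq_zero_iff_mem.mp h6
          have hstep1 : (single u' 1 : A) ^ n - (single v' 1 : A) ^ n ∈ I := by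
            rcases le_or_gt 0 a with hha | hha
            · obtain ⟨p, rfl⟩ := Int.eq_ofNat_of_zero_le hha
              have hamb : n • u + p • (y : Fin m → ℤ) = n • v + p • (x : Fin m → ℤ) := by
                rw [← natCast_zsmul u n, ← natCast_zsmul v n,
                  ← natCast_zsmul ((y : Fin m → ℤ)) p, ← natCast_zsmul ((x : Fin m → ℤ)) p]
                linear_combination (norm := module) ha
              have hpe : n • u' + p • y = n • v' + p • x := by
                apply Subtype.ext
                push_cast
                exact hamb
              exact hcore y x hq.symm hqy0 p hpe
            · set p := (-a).toNat with hp
              have hpa : (p : ℤ) = -a := Int.toNat_of_nonneg (by omega)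
              have hamb : n • u + p • (x : Fin m → ℤ) = n • v + p • (y : Fin m → ℤ) := by
                rw [← natCast_zsmul u n, ← natCast_zsmul v n,
                  ← natCast_zsmul ((y : Fin m → ℤ)) p, ← natCast_zsmul ((x : Fin m → ℤ)) p, hpa]
                linear_combination (norm := module) ha
              have hpe : n • u' + p • x = n • v' + p • y := by
                apply Subtype.ext
                push_cast
                exact hamb
              exact hcore x y hq hqx0 p hpe
          -- step 2: factor
          have hfac := geom_sum₂_mul (single u' (1:K) : A) (single v' 1) n
          rw [← hfac] at hstep1
          rcases hprime.mem_or_mem hstep1 with hS | hD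
          · -- the geometric sum lies in I
            have hΨS := hΨI _ hS
            rw [map_sum] at hΨS
            set ub := ψ u' with hub
            set vb := ψ v' with hvb
            have hterm : ∀ i : ℕ, Ψ ((single u' 1 : A) ^ i * (single v' 1 : A) ^ (n - 1 - i))
                = single (i • ub + (n - 1 - i) • vb) (1 : K) := by
              intro i
              rw [map_mul, map_pow, map_pow, hΨs, hΨs, AddMonoidAlgebra.single_pow,
                AddMonoidAlgebra.single_pow, AddMonoidAlgebra.single_mul_single,
                one_pow, one_pow, one_mul]
            rw [Finset.sum_congr rfl (fun i _ => hterm i)] at hΨS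
            -- distinctness analysis
            have hmain : ∀ i j : ℕ, j < i → i < n →
                i • ub + (n - 1 - i) • vb = j • ub + (n - 1 - j) • vb →
                ∃ b : ℤ, u - v = b • ((x : Fin m → ℤ) - y) := by
              intro i j hji hin hkey
              set k := i - j with hk
              have hk0 : 0 < k := by omega
              have hkn : k < n := by omega
              have hi' : i = j + k := by omega
              have hj' : n - 1 - j = (n - 1 - i) + k := by omega
              have hkey2 : j • ub + (k • ub + (n - 1 - i) • vb)
                  = j • ub + ((n - 1 - i) • vb + k • vb) := by
                calc j • ub + (k • ub + (n - 1 - i) • vb)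
                    = i • ub + (n - 1 - i) • vb := by rw [hi', add_nsmul, add_assoc]
                  _ = j • ub + (n - 1 - j) • vb := hkey
                  _ = j • ub + ((n - 1 - i) • vb + k • vb) := by rw [hj', add_nsmul]
              have hkey3 := add_left_cancel hkey2
              have hkey4 : k • ub = k • vb := by
                have h7 := hkey3.trans (add_comm _ _)
                exact add_right_cancel h7
              have h8 : (Submodule.mkQ (Submodule.span ℤ {(x : Fin m → ℤ) - y})) ((k : ℤ) • (u - v)) = 0 := by
                rw [map_zsmul, map_sub]
                have h9 : (Submodule.mkQ _) u = ub := rfl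
                have h10 : (Submodule.mkQ _) v = vb := rfl
                rw [h9, h10, natCast_zsmul, smul_sub, hkey4, sub_self]
              have h11 : (k : ℤ) • (u - v) ∈ Submodule.span ℤ {(x : Fin m → ℤ) - y} := by
                rwa [← Submodule.Quotient.mk_eq_zero]
                
              obtain ⟨d, hd⟩ := Submodule.mem_span_singleton.mp h11
              exact ih k hkn hk0 (u - v) hz ⟨d, hd.symm⟩
            by_cases hinj : ∀ i < n, ∀ j < n,
                i • ub + (n - 1 - i) • vb = j • ub + (n - 1 - j) • vb → i = j
            · exfalso
              have hsum : ∑ i ∈ Finset.range n,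
                  (if i • ub + (n - 1 - i) • vb = (n - 1) • vb then (1:K) else 0) = 0 := by
                have happ := congrArg
                  (fun F : AddMonoidAlgebra K Qh => (Finsupp.lapply ((n - 1) • vb) : (Qh →₀ K) →ₗ[K] K) F.coeff) hΨS
                rw [AddMonoidAlgebra.coeff_sum, AddMonoidAlgebra.coeff_zero, map_sum, map_zero] at happ
                simpa only [Finsupp.lapply_apply, AddMonoidAlgebra.coeff_single, Finsupp.single_apply] using happ
              have h10 : ∀ i, i < n → i • ub + (n - 1 - i) • vb = (n - 1) • vb → i = 0 := by
                intro i hi hkey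
                refine hinj i hi 0 hn ?_
                rw [hkey]
                simp
              have hone : ∑ i ∈ Finset.range n,
                  (if i • ub + (n - 1 - i) • vb = (n - 1) • vb then (1:K) else 0) = 1 := by
                rw [Finset.sum_eq_single 0]
                · rw [if_pos (by simp)]
                · intro i hi hi0
                  exact if_neg fun hEq => hi0 (h10 i (Finset.mem_range.mp hi) hEq)
                · intro h0
                  exact absurd (Finset.mem_range.mpr hn) h0
              exact one_ne_zero (hone.symm.trans hsum)
            · push_neg at hinj
              obtain ⟨i, hi, j, hj, hkey, hij⟩ := hinj
              rcases lt_trichotomy i j with hlt | heq | hgt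
              · exact hmain j i hlt hj hkey.symm
              · exact absurd heq hij
              · exact hmain i j hgt hi hkey
          · -- Xu - Xv ∈ I
            have h8 := hΨI _ hD
            rw [map_sub, hΨs, hΨs] at h8
            rw [sub_eq_zero] at h8
            have h9 : ψ u' = ψ v' := by
              rcases AddMonoidAlgebra.single_inj.mp h8 with ⟨h9, _⟩ | ⟨h9, _⟩
              · exact h9
              · exact absurd h9 one_ne_zero
            have h11 : u - v ∈ Submodule.span ℤ {(x : Fin m → ℤ) - y} := by
              rw [← Submodule.Quotient.mk_eq_zero]
              have h12 : Submodule.Quotient.mk u - Submodule.Quotient.mk v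
                  = (0 : Qh) := by
                rw [← hψm u', ← hψm v', h9, sub_self]
              rw [← h12]
              rfl
            obtain ⟨d, hd⟩ := Submodule.mem_span_singleton.mp h11
            exact ⟨d, hd.symm⟩
      intro z hz n hn hex
      exact key n hn z hz hex
  · -- backward direction
    rintro ⟨⟨hspan, hreg⟩, htf⟩
    -- I ≠ ⊤
    have hInetop : I ≠ ⊤ := by
      intro htop
      apply hspan
      rw [hset2, eq_top_iff, ← htop, hI, Ideal.span_le]
      intro g hg
      rcases hg with rfl
      exact Ideal.mem_span_pair.mpr ⟨1, -1, by rw [hf]; ring⟩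
    -- regularity consequences
    have hregY : ∀ r : A, Xy * r ∈ Ideal.span {Xx} → r ∈ Ideal.span {Xx} := by
      intro r hr
      have := hreg ⟨1, by simp⟩ r
      simp only [List.get] at this
      rw [hset1] at this
      exact this hr
    have hX : ∀ r : A, Xx * r ∈ I → r ∈ I := by
      intro r hr
      obtain ⟨s, hs⟩ := Ideal.mem_span_singleton'.mp hr
      -- s * f = Xx * r
      rw [hf] at hs
      have h1 : Xy * s ∈ Ideal.span {Xx} :=
        Ideal.mem_span_singleton'.mpr ⟨s - r, by linear_combination hs⟩
      obtain ⟨c, hc⟩ := Ideal.mem_span_singleton'.mp (hregY s h1)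
      have h2 : Xx * (r - c * f) = 0 := by rw [hf]; linear_combination -hs - (Xx - Xy) * hc
      rcases mul_eq_zero.mp h2 with h | h
      · exact absurd h hXx0
      · rw [sub_eq_zero] at h
        rw [h]
        exact I.mul_mem_left c hfI
    have hY : ∀ r : A, Xy * r ∈ I → r ∈ I := by
      intro r hr
      apply hX
      have : Xx * r = f * r + Xy * r := by rw [hf]; ring
      rw [this]
      exact I.add_mem (I.mul_mem_right r hfI) hr
    have hs1 : ∀ r : A, (single (x + y) 1 : A) * r ∈ I → r ∈ I := by
      intro r hr
      have hxy1 : (single (x + y) 1 : A) = Xx * Xy := by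
        rw [hXx, hXy, AddMonoidAlgebra.single_mul_single, one_mul]
      apply hY
      apply hX
      rwa [← mul_assoc, ← hxy1]
    have hsk : ∀ (k : ℕ) (r : A), (single (x + y) 1 : A) ^ k * r ∈ I → r ∈ I := by
      intro k
      induction k with
      | zero => intro r hr; rwa [pow_zero, one_mul] at hr
      | succ k ih =>
        intro r hr
        have heq : (single (x + y) 1 : A) ^ (k+1) * r
            = (single (x + y) 1 : A) ^ k * ((single (x + y) 1 : A) * r) := by ring
        rw [heq] at hr
        exact hs1 r (ih _ hr)
    -- the quotient group Q = gp(M)/ℤ(x-y)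
    set P : Submodule ℤ (Fin m → ℤ) := Submodule.span ℤ (M : Set (Fin m → ℤ)) with hP
    have hxP : (x : Fin m → ℤ) ∈ P := Submodule.subset_span x.2
    have hyP : (y : Fin m → ℤ) ∈ P := Submodule.subset_span y.2
    set w0 : P := ⟨(x : Fin m → ℤ) - y, sub_mem hxP hyP⟩ with hw0
    set L : Submodule ℤ ↥P := Submodule.span ℤ {w0} with hL
    set Q := ↥P ⧸ L with hQ
    haveI : Module.Finite ℤ ↥P := Module.Finite.iff_fg.mpr (IsNoetherian.noetherian P)
    haveI : NoZeroSMulDivisors ℤ Q := by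
      constructor
      intro c q hc
      rcases eq_or_ne c 0 with rfl | hc0
      · exact Or.inl rfl
      right
      obtain ⟨w, rfl⟩ := Submodule.Quotient.mk_surjective L q
      have h1 : (Submodule.Quotient.mk (c • w) : Q) = 0 := by
        rw [Submodule.Quotient.mk_smul]; exact hc
      have h2 : c • w ∈ L := (Submodule.Quotient.mk_eq_zero L).mp h1
      rw [hL] at h2
      obtain ⟨d, hd⟩ := Submodule.mem_span_singleton.mp h2
      have hd' : c • (w : Fin m → ℤ) = d • ((x : Fin m → ℤ) - y) := by
        have := congrArg Subtype.val hd
        simpa [hw0] using this.symm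
      have hzmem : (w : Fin m → ℤ) ∈ Submodule.span ℤ (M : Set (Fin m → ℤ)) := w.2
      have hn : 0 < c.natAbs := Int.natAbs_pos.mpr hc0
      have hex : ∃ a : ℤ, (c.natAbs : ℤ) • (w : Fin m → ℤ) = a • ((x : Fin m → ℤ) - y) := by
        rcases Int.natAbs_eq c with h | h
        · exact ⟨d, by rw [← h]; exact hd'⟩
        · refine ⟨-d, ?_⟩
          have hcc : (c.natAbs : ℤ) = -c := by omega
          rw [hcc, neg_smul, hd', neg_smul]
      obtain ⟨b, hb⟩ := htf _ hzmem c.natAbs hn hex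
      have hwL : w ∈ L := by
        rw [hL]
        exact Submodule.mem_span_singleton.mpr ⟨b, Subtype.ext (by simpa [hw0] using hb.symm)⟩
      exact (Submodule.Quotient.mk_eq_zero L).mpr hwL
    haveI : NoZeroDivisors (AddMonoidAlgebra K Q) := by
      haveI : Module.Free ℤ Q := Module.free_of_finite_type_torsion_free'
      haveI : UniqueSums Q := by
        let b := Module.Free.chooseBasis ℤ Q
        exact UniqueSums.of_injective_addHom b.repr.toAddMonoidHom.toAddHom b.repr.injective inferInstance
      infer_instance
    -- the monoid map and algebra map
    let φ : M →+ Q := {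
      toFun := fun a => Submodule.Quotient.mk ⟨(a : Fin m → ℤ), Submodule.subset_span a.2⟩
      map_zero' := by simp; rfl
      map_add' := by intro a b; rw [← Submodule.Quotient.mk_add]; rfl }
    have hφ : ∀ a b : M, φ a = φ b ↔ ∃ d : ℤ, (a : Fin m → ℤ) - b = d • ((x : Fin m → ℤ) - y) := by
      intro a b
      constructor
      · intro h
        have h2 := (Submodule.Quotient.eq L).mp h
        rw [hL] at h2
        obtain ⟨d, hd⟩ := Submodule.mem_span_singleton.mp h2
        refine ⟨d, ?_⟩
        have := congrArg (Subtype.val) hd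
        simpa [hw0] using this.symm
      · rintro ⟨d, hd⟩
        apply (Submodule.Quotient.eq L).mpr
        rw [hL]
        apply Submodule.mem_span_singleton.mpr
        refine ⟨d, ?_⟩
        apply Subtype.ext
        simpa [hw0] using hd.symm
    let Φ : A →+* AddMonoidAlgebra K Q := AddMonoidAlgebra.mapDomainRingHom K φ
    have hΦs : ∀ a : M, Φ (single a 1) = single (φ a) 1 := by
      intro a
      show AddMonoidAlgebra.mapDomain φ (single a 1) = single (φ a) 1
      exact AddMonoidAlgebra.mapDomain_single
    have hΦf : Φ f = 0 := by
      rw [hf, map_sub, hXx, hXy, hΦs, hΦs, (hφ x y).mpr ⟨1, by simp⟩, sub_self]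
    have hΦI : ∀ g ∈ I, Φ g = 0 := by
      intro g hg
      obtain ⟨c, hc⟩ := Ideal.mem_span_singleton'.mp hg
      rw [← hc, map_mul, hΦf, mul_zero]
    -- kernel of Φ is contained in I after multiplying by a monomial
    have hker : ∀ g : A, Φ g = 0 → g ∈ I := by
      intro g hg
      have hg' : Finsupp.mapDomain (⇑φ) g.coeff = 0 := by exact congrArg AddMonoidAlgebra.coeff hg
      have hspanmem := mapDomain_eq_zero_mem_span (⇑φ) g.coeff hg'
      have main : ∃ k : ℕ, (single (x + y) 1 : A) ^ k * g ∈ I := by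
        refine Submodule.span_induction
          (p := fun g _ => ∃ k : ℕ, (single (x + y) 1 : A) ^ k * (AddMonoidAlgebra.ofCoeff g : A) ∈ I) ?_ ?_ ?_ ?_ hspanmem
        · rintro h ⟨a, b, hab, rfl⟩
          change ∃ k : ℕ, (single (x + y) 1 : A) ^ k * ((single a 1 : A) - single b 1) ∈ I
          have hcore : ∀ (a b : M) (p : ℕ),
              (a : Fin m → ℤ) - b = (p : ℤ) • ((x : Fin m → ℤ) - y) →
              (single (x + y) 1 : A) ^ p *
                ((single a 1 : A) - single b 1) ∈ I := by
            intro a b p hd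
            have hab2 : (a : Fin m → ℤ) + p • (y : Fin m → ℤ)
                = (b : Fin m → ℤ) + p • (x : Fin m → ℤ) := by
              have h1 : (a : Fin m → ℤ) = b + (p:ℤ) • ((x:Fin m → ℤ) - y) :=
                sub_eq_iff_eq_add'.mp hd
              rw [h1, ← natCast_zsmul ((y:Fin m → ℤ)) p, ← natCast_zsmul ((x:Fin m → ℤ)) p]
              module
            have hab3 : a + p • y = b + p • x := by
              apply Subtype.ext
              push_cast
              exact hab2
            have hkey1 : p • (x + y) + a = (p • x + b) + p • x := by
              have : p • (x + y) + a = p • x + (a + p • y) := by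
                rw [smul_add]; abel
              rw [this, hab3]; abel
            have hkey2 : p • (x + y) + b = (p • x + b) + p • y := by
              rw [smul_add]; abel
            have hcalc : (single (x + y) 1 : A) ^ p * ((single a 1 : A) - single b 1)
                = (single (p • x + b) 1 : A) * ((single x 1 : A) ^ p - (single y 1 : A) ^ p) := by
              rw [AddMonoidAlgebra.single_pow, AddMonoidAlgebra.single_pow,
                AddMonoidAlgebra.single_pow, one_pow, mul_sub, mul_sub,
                AddMonoidAlgebra.single_mul_single, AddMonoidAlgebra.single_mul_single,
                AddMonoidAlgebra.single_mul_single, AddMonoidAlgebra.single_mul_single,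
                one_mul, hkey1, hkey2]
            rw [hcalc]
            exact I.mul_mem_left _ (pow_sub_pow_mem Xx Xy p)
          obtain ⟨d, hd⟩ := (hφ a b).mp hab
          rcases le_or_gt 0 d with hd0 | hd0
          · obtain ⟨p, rfl⟩ := Int.eq_ofNat_of_zero_le hd0
            exact ⟨p, hcore a b p hd⟩
          · have hd' : (b : Fin m → ℤ) - a = ((-d).toNat : ℤ) • ((x : Fin m → ℤ) - y) := by
              rw [Int.toNat_of_nonneg (by omega)]
              have : (b : Fin m → ℤ) - a = -((a : Fin m → ℤ) - b) := by abel
              rw [this, hd, ← neg_smul]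
            refine ⟨(-d).toNat, ?_⟩
            have := hcore b a (-d).toNat hd'
            have heq : (single (x + y) 1 : A) ^ (-d).toNat * ((single a 1 : A) - (single b 1 : A))
                = -((single (x + y) 1 : A) ^ (-d).toNat * ((single b 1 : A) - (single a 1 : A))) := by
              ring
            rw [heq]
            exact I.neg_mem this
        · exact ⟨0, by simp⟩
        · rintro g1 g2 _ _ ⟨k1, h1⟩ ⟨k2, h2⟩
          refine ⟨k1 + k2, ?_⟩
          have : (single (x + y) 1 : A) ^ (k1 + k2) * (AddMonoidAlgebra.ofCoeff g1 + AddMonoidAlgebra.ofCoeff g2)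
              = (single (x + y) 1 : A) ^ k2 * ((single (x + y) 1 : A) ^ k1 * AddMonoidAlgebra.ofCoeff g1)
              + (single (x + y) 1 : A) ^ k1 * ((single (x + y) 1 : A) ^ k2 * AddMonoidAlgebra.ofCoeff g2) := by
            ring
          rw [AddMonoidAlgebra.ofCoeff_add, this]
          exact I.add_mem (I.mul_mem_left _ h1) (I.mul_mem_left _ h2)
        · rintro c g1 _ ⟨k, h1⟩
          refine ⟨k, ?_⟩
          rw [AddMonoidAlgebra.ofCoeff_smul, mul_smul_comm, Algebra.smul_def]
          exact I.mul_mem_left _ h1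
      obtain ⟨k, hk⟩ := main
      exact hsk k g hk
    -- conclude primality
    refine Ideal.isPrime_iff.mpr ⟨hInetop, ?_⟩
    intro g h hgh
    have h0 : Φ g * Φ h = 0 := by
      rw [← map_mul]
      exact hΦI _ hgh
    rcases mul_eq_zero.mp h0 with h1 | h1
    · exact Or.inl (hker g h1)
    · exact Or.inr (hker h h1)
end

section
/- Let K be a field, M ⊆ ℤ^m an affine monoid, and let x, y ∈ M be noninvertible elements with x ≠ y. Let M' ⊆ ℤ^{m'} be an affine monoid and φ : M → M' a surjective additive monoid homomorphism with rank M' = rank M − 1 and φ(x) = φ(y). Then the ideal of K[M] generated by X^x − X^y is prime if and only if the kernel of the induced surjective K-algebra homomorphism K[M] → K[M'] (sending X^z to X^{φ(z)} for z ∈ M) equals the ideal generated by X^x − X^y; that is, if and only if this homomorphism induces a K-algebra isomorphism K[M]/(X^x − X^y) ≅ K[M']. -/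
open AddMonoidAlgebra

namespace BinPrimeAux

variable {m m' : ℕ}

/-- The set of differences of elements of an `AddSubmonoid` of `ℤ^m` is a `ℤ`-submodule. -/
def diffSub (M : AddSubmonoid (Fin m → ℤ)) : Submodule ℤ (Fin m → ℤ) where
  carrier := {v | ∃ a b : M, v = (a : Fin m → ℤ) - b}
  add_mem' := by
    rintro u v ⟨a, b, rfl⟩ ⟨c, d, rfl⟩
    exact ⟨a + c, b + d, by push_cast; ring⟩
  zero_mem' := ⟨0, 0, by simp⟩
  smul_mem' := by
    rintro n v ⟨a, b, rfl⟩
    rcases le_or_gt 0 n with h | h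
    · lift n to ℕ using h
      exact ⟨n • a, n • b, by show _ = n • (a:Fin m → ℤ) - n • (b:Fin m → ℤ); module⟩
    · obtain ⟨k, rfl⟩ : ∃ k : ℕ, n = -(k : ℤ) := ⟨n.natAbs, by omega⟩
      exact ⟨k • b, k • a, by show _ = k • (b:Fin m → ℤ) - k • (a:Fin m → ℤ); module⟩

lemma mem_span_iff (M : AddSubmonoid (Fin m → ℤ)) (v : Fin m → ℤ) :
    v ∈ Submodule.span ℤ (M : Set (Fin m → ℤ)) ↔ ∃ a b : M, v = (a : Fin m → ℤ) - b := by
  constructor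
  · intro hv
    have hle : Submodule.span ℤ (M : Set (Fin m → ℤ)) ≤ diffSub M := by
      rw [Submodule.span_le]
      intro z hz
      exact ⟨⟨z, hz⟩, 0, by simp⟩
    exact hle hv
  · rintro ⟨a, b, rfl⟩
    exact sub_mem (Submodule.subset_span a.2) (Submodule.subset_span b.2)

variable {M : AddSubmonoid (Fin m → ℤ)} {M' : AddSubmonoid (Fin m' → ℤ)} (φ : M →+ M')

lemma phi_diff_eq {a b c d : M} (h : (a : Fin m → ℤ) - b = (c : Fin m → ℤ) - d) :
    (φ a : Fin m' → ℤ) - φ b = (φ c : Fin m' → ℤ) - φ d := by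
  have h1 : a + d = c + b := by
    apply Subtype.ext
    push_cast
    linear_combination h
  have h2 := congrArg (fun z => ((φ z : M') : Fin m' → ℤ)) h1
  simp only [map_add] at h2
  push_cast at h2
  linear_combination h2

/-- The function underlying the induced linear map on spans. -/
noncomputable def psifun (v : Submodule.span ℤ (M : Set (Fin m → ℤ))) : Fin m' → ℤ :=
  ((φ ((mem_span_iff M v).1 v.2).choose : M') : Fin m' → ℤ) -
    (φ ((mem_span_iff M v).1 v.2).choose_spec.choose : M')

lemma psifun_eq {v : Submodule.span ℤ (M : Set (Fin m → ℤ))} {a b : M}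
    (h : (v : Fin m → ℤ) = (a : Fin m → ℤ) - b) :
    psifun φ v = (φ a : Fin m' → ℤ) - φ b := by
  have hs := ((mem_span_iff M v).1 v.2).choose_spec.choose_spec
  exact phi_diff_eq φ (hs.symm.trans h)

lemma psifun_add (u v : Submodule.span ℤ (M : Set (Fin m → ℤ))) :
    psifun φ (u + v) = psifun φ u + psifun φ v := by
  obtain ⟨a, b, hab⟩ := (mem_span_iff M u).1 u.2
  obtain ⟨c, d, hcd⟩ := (mem_span_iff M v).1 v.2
  have huv : ((u + v : _) : Fin m → ℤ) = ((a + c : M) : Fin m → ℤ) - ((b + d : M)) := by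
    rw [Submodule.coe_add, hab, hcd]
    push_cast
    ring
  rw [psifun_eq φ huv, psifun_eq φ hab, psifun_eq φ hcd]
  simp only [map_add]
  push_cast
  ring

lemma psifun_smul (n : ℤ) (v : Submodule.span ℤ (M : Set (Fin m → ℤ))) :
    psifun φ (n • v) = n • psifun φ v := by
  obtain ⟨a, b, hab⟩ := (mem_span_iff M v).1 v.2
  rcases le_or_gt 0 n with h | h
  · lift n to ℕ using h
    have huv : (((n:ℤ) • v : _) : Fin m → ℤ) = ((n • a : M) : Fin m → ℤ) - ((n • b : M)) := by
      rw [Submodule.coe_smul, hab]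
      show _ = n • (a : Fin m → ℤ) - n • (b : Fin m → ℤ)
      module
    rw [psifun_eq φ huv, psifun_eq φ hab]
    simp only [map_nsmul]
    show ((n • φ a : M') : Fin m' → ℤ) - ((n • φ b : M') : Fin m' → ℤ) = _
    show n • (φ a : Fin m' → ℤ) - n • (φ b : Fin m' → ℤ) = _
    module
  · obtain ⟨k, rfl⟩ : ∃ k : ℕ, n = -(k : ℤ) := ⟨n.natAbs, by omega⟩
    have huv : (((-(k:ℤ)) • v : _) : Fin m → ℤ) = ((k • b : M) : Fin m → ℤ) - ((k • a : M)) := by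
      rw [Submodule.coe_smul, hab]
      show _ = k • (b : Fin m → ℤ) - k • (a : Fin m → ℤ)
      module
    rw [psifun_eq φ huv, psifun_eq φ hab]
    simp only [map_nsmul]
    show ((k • φ b : M') : Fin m' → ℤ) - ((k • φ a : M') : Fin m' → ℤ) = _
    show k • (φ b : Fin m' → ℤ) - k • (φ a : Fin m' → ℤ) = _
    module

/-- The induced linear map on spans. -/
noncomputable def psi : Submodule.span ℤ (M : Set (Fin m → ℤ)) →ₗ[ℤ] (Fin m' → ℤ) where
  toFun := psifun φ
  map_add' := psifun_add φ
  map_smul' := psifun_smul φ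

lemma psi_apply {a b : M} {v : Submodule.span ℤ (M : Set (Fin m → ℤ))}
    (h : (v : Fin m → ℤ) = (a : Fin m → ℤ) - b) :
    psi φ v = (φ a : Fin m' → ℤ) - φ b := psifun_eq φ h

lemma finite_span (M : AddSubmonoid (Fin m → ℤ)) (h : M.FG) :
    Module.Finite ℤ (Submodule.span ℤ (M : Set (Fin m → ℤ))) := by
  obtain ⟨s, hs⟩ := h
  have he : Submodule.span ℤ (M : Set (Fin m → ℤ)) = Submodule.span ℤ (s : Set (Fin m → ℤ)) := by
    apply le_antisymm
    · rw [Submodule.span_le]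
      intro z hz
      have hle : M ≤ (Submodule.span ℤ (s : Set (Fin m → ℤ))).toAddSubmonoid := by
        rw [← hs, AddSubmonoid.closure_le]
        exact Submodule.subset_span
      exact hle hz
    · exact Submodule.span_mono (by rw [← hs]; exact AddSubmonoid.subset_closure)
  rw [he]
  exact Module.Finite.span_of_finite ℤ s.finite_toSet

lemma exists_dep {M : AddSubmonoid (Fin m → ℤ)} {M' : AddSubmonoid (Fin m' → ℤ)}
    (hMfg : M.FG) (hM'fg : M'.FG) (φ : M →+ M') (hφsurj : Function.Surjective φ)
    (hrank : Module.finrank ℤ (Submodule.span ℤ (M' : Set (Fin m' → ℤ))) + 1 =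
      Module.finrank ℤ (Submodule.span ℤ (M : Set (Fin m → ℤ))))
    (x y : M) (hφxy : φ x = φ y) (hxy : x ≠ y) (a b : M) (hab : φ a = φ b) :
    ∃ p q : ℤ, p ≠ 0 ∧ p • ((a : Fin m → ℤ) - b) = q • ((x : Fin m → ℤ) - y) := by
  by_contra hcon
  push_neg at hcon
  set u : Fin m → ℤ := (a : Fin m → ℤ) - b with hu
  set v₀ : Fin m → ℤ := (x : Fin m → ℤ) - y with hv₀def
  have hv₀ : v₀ ≠ 0 := by
    intro h0
    exact hxy (Subtype.ext (by rwa [hv₀def, sub_eq_zero] at h0))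
  have hpair : LinearIndependent ℤ ![u, v₀] := by
    rw [LinearIndependent.pair_iff]
    intro s t hst
    have h1 : s • u = (-t) • v₀ := by
      rw [neg_smul, eq_neg_iff_add_eq_zero]
      exact hst
    have hs0 : s = 0 := by
      by_contra hs
      exact hcon s (-t) hs h1
    refine ⟨hs0, ?_⟩
    rw [hs0, zero_smul, zero_add] at hst
    rcases smul_eq_zero.mp hst with h | h
    · exact h
    · exact absurd h hv₀
  haveI := finite_span M hMfg
  haveI := finite_span M' hM'fg
  set V := Submodule.span ℤ (M : Set (Fin m → ℤ))
  set V' := Submodule.span ℤ (M' : Set (Fin m' → ℤ))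
  let b' := Module.Free.chooseBasis ℤ V'
  have hw : ∀ i, ∃ w : V, psi φ w = ((b' i : V') : Fin m' → ℤ) := by
    intro i
    obtain ⟨a', c', h'⟩ := (mem_span_iff M' _).1 (b' i).2
    obtain ⟨aa, haa⟩ := hφsurj a'
    obtain ⟨cc, hcc⟩ := hφsurj c'
    refine ⟨⟨(aa : Fin m → ℤ) - cc,
      sub_mem (Submodule.subset_span aa.2) (Submodule.subset_span cc.2)⟩, ?_⟩
    rw [psi_apply φ rfl, haa, hcc]
    exact h'.symm
  choose w hwspec using hw
  have humem : u ∈ V := sub_mem (Submodule.subset_span a.2) (Submodule.subset_span b.2)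
  have hv₀mem : v₀ ∈ V := sub_mem (Submodule.subset_span x.2) (Submodule.subset_span y.2)
  set F : Module.Free.ChooseBasisIndex ℤ V' ⊕ Fin 2 → V :=
    Sum.elim w ![⟨u, humem⟩, ⟨v₀, hv₀mem⟩] with hF
  have hpsiu : psi φ (⟨u, humem⟩ : V) = 0 := by
    rw [psi_apply φ (a := a) (b := b) rfl, hab, sub_self]
  have hpsiv₀ : psi φ (⟨v₀, hv₀mem⟩ : V) = 0 := by
    rw [psi_apply φ (a := x) (b := y) rfl, hφxy, sub_self]
  have hFind : LinearIndependent ℤ F := by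
    rw [Fintype.linearIndependent_iff]
    intro c hc
    have h1 : ∑ i, c i • psi φ (F i) = 0 := by
      rw [← map_zero (psi φ), ← hc, map_sum]
      simp [map_smul]
    rw [Fintype.sum_sum_type] at h1
    have h2 : ∀ j : Fin 2, psi φ (F (Sum.inr j)) = 0 := by
      intro j
      fin_cases j <;> simp only [hF, Sum.elim_inr] <;>
        [exact hpsiu; exact hpsiv₀]
    simp only [h2, smul_zero, Finset.sum_const_zero, add_zero] at h1
    have h3 : ∀ i, c (Sum.inl i) = 0 := by
      have h4 : ((∑ i, c (Sum.inl i) • b' i : V') : Fin m' → ℤ) = 0 := by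
        push_cast
        simpa only [hF, Sum.elim_inl, hwspec] using h1
      have h5 : (∑ i, c (Sum.inl i) • b' i : V') = 0 := Subtype.ext h4
      exact Fintype.linearIndependent_iff.mp b'.linearIndependent _ h5
    rw [Fintype.sum_sum_type] at hc
    simp only [h3, zero_smul, Finset.sum_const_zero, zero_add] at hc
    rw [Fin.sum_univ_two] at hc
    have h6 : c (Sum.inr 0) • u + c (Sum.inr 1) • v₀ = 0 := by
      have := congrArg (fun z : V => (z : Fin m → ℤ)) hc
      simpa [hF] using this
    obtain ⟨h7, h8⟩ := LinearIndependent.pair_iff.mp hpair _ _ h6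
    intro i
    rcases i with i | j
    · exact h3 i
    · fin_cases j
      · exact h7
      · exact h8
  have hcard := hFind.fintype_card_le_finrank
  rw [Fintype.card_sum, Fintype.card_fin] at hcard
  rw [← Module.finrank_eq_card_chooseBasisIndex ℤ V'] at hcard
  omega

section MonAlg

variable {K : Type*} [Field K] {M : AddSubmonoid (Fin m → ℤ)}

/-- The homogeneous-component extractor, typed in the monoid algebra. -/
noncomputable def comp (p : M → Prop) (f : AddMonoidAlgebra K M) : AddMonoidAlgebra K M :=
  letI := Classical.decPred p
  AddMonoidAlgebra.ofCoeff (Finsupp.filter p f.coeff)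

lemma comp_add (p : M → Prop) (f g : AddMonoidAlgebra K M) :
    comp p (f + g) = comp p f + comp p g := by
  unfold comp
  letI := Classical.decPred p
  rw [AddMonoidAlgebra.coeff_add, Finsupp.filter_add]
  rfl

lemma comp_zero (p : M → Prop) : comp p (0 : AddMonoidAlgebra K M) = 0 := by
  unfold comp
  letI := Classical.decPred p
  rw [AddMonoidAlgebra.coeff_zero, Finsupp.filter_zero]
  rfl

lemma comp_sub (p : M → Prop) (f g : AddMonoidAlgebra K M) :
    comp p (f - g) = comp p f - comp p g := by
  unfold comp
  letI := Classical.decPred p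
  rw [AddMonoidAlgebra.coeff_sub, Finsupp.filter_sub]
  rfl

lemma comp_single_of_pos (p : M → Prop) (a : M) (r : K) (h : p a) :
    comp p (single a r : AddMonoidAlgebra K M) = single a r := by
  unfold comp
  letI := Classical.decPred p
  rw [AddMonoidAlgebra.coeff_single, Finsupp.filter_single_of_pos _ h]
  rfl

lemma comp_single_of_neg (p : M → Prop) (a : M) (r : K) (h : ¬ p a) :
    comp p (single a r : AddMonoidAlgebra K M) = 0 := by
  unfold comp
  letI := Classical.decPred p
  rw [AddMonoidAlgebra.coeff_single, Finsupp.filter_single_of_neg _ h]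
  rfl

lemma comp_sum (p : M → Prop) {ι : Type*} (s : Finset ι) (f : ι → AddMonoidAlgebra K M) :
    comp p (∑ i ∈ s, f i) = ∑ i ∈ s, comp p (f i) := by
  unfold comp
  letI := Classical.decPred p
  rw [AddMonoidAlgebra.coeff_sum]
  change AddMonoidAlgebra.ofCoeff (Finsupp.filterAddHom p (∑ i ∈ s, (f i).coeff)) = _
  rw [map_sum, AddMonoidAlgebra.ofCoeff_sum]
  rfl

/-- Multiplying by the binomial `X^x - X^y` shifts homogeneous components. -/
lemma comp_mul_binomial (x y : M) (h : AddMonoidAlgebra K M)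
    (γ : (Fin m → ℤ) ⧸ AddSubgroup.zmultiples ((x : Fin m → ℤ) - y)) :
    comp (fun z : M =>
        (QuotientAddGroup.mk' (AddSubgroup.zmultiples ((x : Fin m → ℤ) - y))) (z : Fin m → ℤ) = γ)
      (((single x 1 : AddMonoidAlgebra K M) - single y 1) * h) =
    ((single x 1 : AddMonoidAlgebra K M) - single y 1) *
      comp (fun z : M =>
        (QuotientAddGroup.mk' (AddSubgroup.zmultiples ((x : Fin m → ℤ) - y)))
          ((x : Fin m → ℤ) + (z : Fin m → ℤ)) = γ) h := by
  set π := QuotientAddGroup.mk' (AddSubgroup.zmultiples ((x : Fin m → ℤ) - y)) with hπdef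
  have hπxy : π (x : Fin m → ℤ) = π (y : Fin m → ℤ) := by
    rw [hπdef, QuotientAddGroup.mk'_apply, QuotientAddGroup.mk'_apply, QuotientAddGroup.eq]
    exact ⟨-1, by module⟩
  induction h using AddMonoidAlgebra.induction_linear with
  | zero => rw [mul_zero, comp_zero, comp_zero, mul_zero]
  | add f g hf hg => rw [mul_add, comp_add, hf, hg, comp_add, mul_add]
  | single c r =>
    have hexp : ((single x 1 : AddMonoidAlgebra K M) - single y 1) * single c r
        = single (x + c) r - single (y + c) r := by
      rw [sub_mul, single_mul_single, single_mul_single, one_mul]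
    rw [hexp]
    by_cases hc : π ((x : Fin m → ℤ) + (c : Fin m → ℤ)) = γ
    · have hcx : π ((x + c : M) : Fin m → ℤ) = γ := hc
      have hcy : π ((y + c : M) : Fin m → ℤ) = γ := by
        show π ((y : Fin m → ℤ) + c) = γ
        rw [map_add, ← hπxy, ← map_add]
        exact hc
      rw [comp_sub, comp_single_of_pos _ _ _ hcx, comp_single_of_pos _ _ _ hcy,
        comp_single_of_pos _ _ _ hc, hexp]
    · have hcx : ¬ π ((x + c : M) : Fin m → ℤ) = γ := hc
      have hcy : ¬ π ((y + c : M) : Fin m → ℤ) = γ := by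
        show ¬ π ((y : Fin m → ℤ) + c) = γ
        rw [map_add, ← hπxy, ← map_add]
        exact hc
      rw [comp_sub, comp_single_of_neg _ _ _ hcx, comp_single_of_neg _ _ _ hcy,
        comp_single_of_neg _ _ _ hc, sub_self, mul_zero]

lemma comp_mem_span (x y : M) (f : AddMonoidAlgebra K M)
    (hf : f ∈ Ideal.span {(single x 1 : AddMonoidAlgebra K M) - single y 1})
    (γ : (Fin m → ℤ) ⧸ AddSubgroup.zmultiples ((x : Fin m → ℤ) - y)) :
    comp (fun z : M =>
        (QuotientAddGroup.mk' (AddSubgroup.zmultiples ((x : Fin m → ℤ) - y))) (z : Fin m → ℤ) = γ)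
      f ∈ Ideal.span {(single x 1 : AddMonoidAlgebra K M) - single y 1} := by
  rw [Ideal.mem_span_singleton] at hf ⊢
  obtain ⟨h, rfl⟩ := hf
  rw [comp_mul_binomial]
  exact Dvd.intro _ rfl

lemma core_binomial (x y a b : M) (hxy : x ≠ y)
    (hmono : ∀ c : M, (single c 1 : AddMonoidAlgebra K M) ∉
      Ideal.span {(single x 1 : AddMonoidAlgebra K M) - single y 1})
    (hprime : (Ideal.span {(single x 1 : AddMonoidAlgebra K M) - single y 1}).IsPrime)
    (p q : ℕ) (hp : 0 < p) (hpq : Nat.Coprime p q)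
    (heq : (p : ℤ) • ((a : Fin m → ℤ) - b) = (q : ℤ) • ((x : Fin m → ℤ) - y)) :
    (single a 1 : AddMonoidAlgebra K M) - single b 1 ∈
      Ideal.span {(single x 1 : AddMonoidAlgebra K M) - single y 1} := by
  classical
  set g : AddMonoidAlgebra K M := single x 1 - single y 1 with hg
  set S := Ideal.span {g} with hS
  by_cases hab : a = b
  · rw [hab, sub_self]; exact S.zero_mem
  have hq : 0 < q := by
    rcases Nat.eq_zero_or_pos q with h0 | h0
    · exfalso
      apply hab
      rw [h0] at heq
      simp only [Nat.cast_zero, zero_smul] at heq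
      rcases smul_eq_zero.mp heq with h | h
      · exact absurd h (by positivity)
      · exact Subtype.ext (by rwa [sub_eq_zero] at h)
    · exact h0
  -- the lattice identity, in the monoid M
  have hmon : p • a + q • y = q • x + p • b := by
    apply Subtype.ext
    show p • (a : Fin m → ℤ) + q • (y : Fin m → ℤ) = q • (x : Fin m → ℤ) + p • (b : Fin m → ℤ)
    funext j
    have h := congrFun heq j
    simp only [Pi.smul_apply, Pi.sub_apply, smul_eq_mul, Pi.add_apply, nsmul_eq_mul,
      Pi.mul_apply, Pi.natCast_apply] at h ⊢
    push_cast
    linarith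
  -- X^{qx} - X^{qy} ∈ S
  have h1 : (single (q • x) 1 : AddMonoidAlgebra K M) - single (q • y) 1 ∈ S := by
    rw [hS, Ideal.mem_span_singleton]
    have hd := sub_dvd_pow_sub_pow (single x 1 : AddMonoidAlgebra K M) (single y 1) q
    rwa [single_pow, single_pow, one_pow] at hd
  -- X^{pa} - X^{pb} ∈ S
  have h2 : (single (q • y) 1 : AddMonoidAlgebra K M) * (single (p • a) 1 - single (p • b) 1)
      = single (p • b) 1 * (single (q • x) 1 - single (q • y) 1) := by
    rw [mul_sub, mul_sub, single_mul_single, single_mul_single, single_mul_single,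
      single_mul_single, one_mul]
    congr 2
    · rw [add_comm, hmon, add_comm]
    · rw [add_comm]
  have h3 : (single (p • a) 1 : AddMonoidAlgebra K M) - single (p • b) 1 ∈ S := by
    have hmem : (single (q • y) 1 : AddMonoidAlgebra K M) *
        (single (p • a) 1 - single (p • b) 1) ∈ S := by
      rw [h2]
      exact Ideal.mul_mem_left _ _ h1
    rcases hprime.mem_or_mem hmem with h | h
    · exact absurd h (hmono _)
    · exact h
  -- factor
  have hfac : (single (p • a) 1 : AddMonoidAlgebra K M) - single (p • b) 1
      = (∑ i ∈ Finset.range p, single (i • a + (p - 1 - i) • b) 1) * (single a 1 - single b 1) := by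
    have hgs := geom_sum₂_mul (single a 1 : AddMonoidAlgebra K M) (single b 1) p
    rw [single_pow, single_pow, one_pow] at hgs
    rw [← hgs]
    congr 1
    refine Finset.sum_congr rfl fun i _ => ?_
    simp [single_pow, single_mul_single]
  rw [hfac] at h3
  rcases hprime.mem_or_mem h3 with h | h
  · -- the geometric sum cannot lie in S: its components are single monomials
    exfalso
    set π := QuotientAddGroup.mk' (AddSubgroup.zmultiples ((x : Fin m → ℤ) - y)) with hπdef
    set c : ℕ → M := fun i => i • a + (p - 1 - i) • b with hc
    have hv₀ : (x : Fin m → ℤ) - y ≠ 0 := by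
      intro h0
      exact hxy (Subtype.ext (by rwa [sub_eq_zero] at h0))
    -- distinct degrees
    have hdeg : ∀ i ∈ Finset.range p, i ≠ 0 →
        π ((c i : M) : Fin m → ℤ) ≠ π ((c 0 : M) : Fin m → ℤ) := by
      intro i hi hi0 hcon
      rw [hπdef, QuotientAddGroup.mk'_apply, QuotientAddGroup.mk'_apply, QuotientAddGroup.eq,
        AddSubgroup.mem_zmultiples_iff] at hcon
      obtain ⟨n, hn⟩ := hcon
      have hirange := Finset.mem_range.mp hi
      have hdiff : -((c i : M) : Fin m → ℤ) + ((c 0 : M) : Fin m → ℤ)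
          = (-(i : ℤ)) • ((a : Fin m → ℤ) - (b : Fin m → ℤ)) := by
        show -((i • a + (p - 1 - i) • b : M) : Fin m → ℤ) +
          ((0 • a + (p - 1 - 0) • b : M) : Fin m → ℤ) = _
        push_cast
        funext j
        simp only [Pi.add_apply, Pi.neg_apply, Pi.smul_apply, Pi.sub_apply, smul_eq_mul,
          Pi.natCast_apply, Pi.intCast_apply, neg_mul]
        have hcast : ((p - 1 - i : ℕ) : ℤ) = ((p - 1 : ℕ) : ℤ) - i := by omega
        simp only [nsmul_eq_mul, Nat.sub_zero]
        push_cast [hcast]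
        ring
      rw [hdiff] at hn
      have hpn : (p : ℤ) • (n • ((x : Fin m → ℤ) - y))
          = (-(i : ℤ) * q) • ((x : Fin m → ℤ) - y) := by
        rw [hn, smul_comm, mul_smul, heq, smul_comm]
      have hcoeff : (p : ℤ) * n = -(i : ℤ) * q := by
        have hz : ((p : ℤ) * n - (-(i : ℤ) * q)) • ((x : Fin m → ℤ) - y) = 0 := by
          rw [sub_smul, mul_smul, hpn]
          exact sub_self _
        rcases smul_eq_zero.mp hz with h' | h'
        · linarith [h']
        · exact absurd h' hv₀
      have hdvd : (p : ℤ) ∣ (i : ℤ) * q := ⟨-n, by linarith [hcoeff]⟩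
      have hdvdn : p ∣ i * q := by exact_mod_cast hdvd
      have hpi : p ∣ i := hpq.dvd_of_dvd_mul_right hdvdn
      exact hi0 (Nat.eq_zero_of_dvd_of_lt hpi hirange)
    -- extract the component of degree π (c 0)
    have hfifil := comp_mem_span x y _ h (π ((c 0 : M) : Fin m → ℤ))
    have hfe : comp (fun z : M => π (z : Fin m → ℤ) = π ((c 0 : M) : Fin m → ℤ))
        (∑ i ∈ Finset.range p, (single (c i) 1 : AddMonoidAlgebra K M))
        = (single (c 0) 1 : AddMonoidAlgebra K M) := by
      rw [comp_sum]
      rw [Finset.sum_eq_single_of_mem 0 (Finset.mem_range.mpr hp)]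
      · exact comp_single_of_pos _ _ _ rfl
      · intro i hi hi0
        exact comp_single_of_neg _ _ _ (hdeg i hi hi0)
    rw [hfe] at hfifil
    exact hmono _ hfifil
  · exact h

end MonAlg

section Ker

variable {K : Type*} [Field K] {M : AddSubmonoid (Fin m → ℤ)} {M' : AddSubmonoid (Fin m' → ℤ)}

lemma binomial_mem_ker (φ : M →+ M') {a b : M} (hab : φ a = φ b) :
    (single a 1 : AddMonoidAlgebra K M) - single b 1 ∈ RingHom.ker (mapDomainRingHom K φ) := by
  rw [RingHom.mem_ker, map_sub]
  show AddMonoidAlgebra.mapDomain (⇑φ) (single a 1 : AddMonoidAlgebra K M) -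
    AddMonoidAlgebra.mapDomain (⇑φ) (single b 1 : AddMonoidAlgebra K M) = 0
  rw [AddMonoidAlgebra.mapDomain_single, AddMonoidAlgebra.mapDomain_single, hab, sub_self]

lemma scaled_binomial_eq (a b : M) (r : K) :
    (single a r : AddMonoidAlgebra K M) - single b r
      = single (0 : M) r * (single a 1 - single b 1) := by
  rw [mul_sub, single_mul_single, single_mul_single, zero_add, zero_add, mul_one]

lemma ker_le_span (x y : M) (φ : M →+ M')
    (hbin : ∀ a b : M, φ a = φ b →
      (single a 1 : AddMonoidAlgebra K M) - single b 1 ∈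
        Ideal.span {(single x 1 : AddMonoidAlgebra K M) - single y 1})
    (f : AddMonoidAlgebra K M) (hf : f ∈ RingHom.ker (mapDomainRingHom K φ)) :
    f ∈ Ideal.span {(single x 1 : AddMonoidAlgebra K M) - single y 1} := by
  classical
  set S := Ideal.span {(single x 1 : AddMonoidAlgebra K M) - single y 1} with hS
  generalize hn : f.coeff.support.card = n
  induction n using Nat.strong_induction_on generalizing f with
  | _ n ih =>
    rcases eq_or_ne f 0 with rfl | hf0
    · exact S.zero_mem
    obtain ⟨a, ha⟩ := Finsupp.support_nonempty_iff.mpr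
      (fun h => hf0 (AddMonoidAlgebra.coeff_eq_zero.mp h))
    have hmap : AddMonoidAlgebra.mapDomain (⇑φ) f = 0 := by
      rw [RingHom.mem_ker] at hf
      exact hf
    have hev : ∑ z ∈ f.coeff.support, (if φ z = φ a then f.coeff z else 0) = 0 := by
      have hap := congrArg (fun F : AddMonoidAlgebra K M' => F.coeff (φ a)) hmap
      simp only [AddMonoidAlgebra.coeff_zero, Finsupp.coe_zero, Pi.zero_apply] at hap
      change (Finsupp.mapDomain (⇑φ) f.coeff) (φ a) = 0 at hap
      rw [Finsupp.mapDomain, Finsupp.sum_apply] at hap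
      calc ∑ z ∈ f.coeff.support, (if φ z = φ a then f.coeff z else 0)
          = Finsupp.sum f.coeff (fun a₁ b => (Finsupp.single (φ a₁) b : M' →₀ K) (φ a)) := by
            rw [Finsupp.sum]
            exact Finset.sum_congr rfl fun z _ => (Finsupp.single_apply).symm
        _ = 0 := hap
    by_cases hb : ∃ b ∈ f.coeff.support, b ≠ a ∧ φ b = φ a
    · obtain ⟨b, hbs, hba, hphib⟩ := hb
      set f' := f - (single a (f.coeff a) - single b (f.coeff a)) with hf'
      have hbinm : (single a (f.coeff a) : AddMonoidAlgebra K M) - single b (f.coeff a) ∈ S := by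
        rw [scaled_binomial_eq]
        exact Ideal.mul_mem_left _ _ (hbin a b hphib.symm)
      have hbink : (single a (f.coeff a) : AddMonoidAlgebra K M) - single b (f.coeff a) ∈
          RingHom.ker (mapDomainRingHom K φ) := by
        rw [scaled_binomial_eq]
        exact Ideal.mul_mem_left _ _ (binomial_mem_ker φ hphib.symm)
      have hf'ker : f' ∈ RingHom.ker (mapDomainRingHom K φ) := sub_mem hf hbink
      have hsupp : f'.coeff.support ⊆ f.coeff.support.erase a := by
        intro z hz
        rw [Finsupp.mem_support_iff] at hz
        have hz' : f'.coeff z = f.coeff z - ((single a (f.coeff a) : AddMonoidAlgebra K M).coeff z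
            - (single b (f.coeff a) : AddMonoidAlgebra K M).coeff z) := by
          rw [hf']
          rfl
        rw [Finset.mem_erase, Finsupp.mem_support_iff]
        constructor
        · rintro rfl
          apply hz
          rw [hz', AddMonoidAlgebra.coeff_single, AddMonoidAlgebra.coeff_single,
            Finsupp.single_apply, Finsupp.single_apply, if_pos rfl, if_neg hba]
          ring
        · intro h0
          apply hz
          rcases eq_or_ne z b with rfl | hzb
          · exact absurd h0 (Finsupp.mem_support_iff.mp hbs)
          · have hza : z ≠ a := by
              rintro rfl
              exact (Finsupp.mem_support_iff.mp ha) h0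
            rw [hz', AddMonoidAlgebra.coeff_single, AddMonoidAlgebra.coeff_single,
              Finsupp.single_apply, Finsupp.single_apply, if_neg (fun h => hza h.symm),
              if_neg (fun h => hzb h.symm), h0]
            ring
      have hcard : f'.coeff.support.card < n := by
        calc f'.coeff.support.card ≤ (f.coeff.support.erase a).card := Finset.card_le_card hsupp
        _ < f.coeff.support.card := Finset.card_erase_lt_of_mem ha
        _ = n := hn
      have hf'S : f' ∈ S := ih _ hcard f' hf'ker rfl
      have : f = f' + (single a (f.coeff a) - single b (f.coeff a)) := by
        rw [hf']
        ring
      rw [this]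
      exact S.add_mem hf'S hbinm
    · exfalso
      push_neg at hb
      rw [Finset.sum_eq_single_of_mem a ha (fun z hzs hz => if_neg (hb z hzs hz))] at hev
      rw [if_pos rfl] at hev
      exact (Finsupp.mem_support_iff.mp ha) hev

end Ker
end BinPrimeAux

/-- **Theorem.** Let `K` be a field, `M ⊆ ℤ^m` an affine monoid, `x ≠ y` noninvertible
elements of `M`, and `φ : M → M'` a surjective monoid homomorphism onto an affine monoid
`M' ⊆ ℤ^{m'}` with `rank M' = rank M − 1` and `φ(x) = φ(y)`.  Then `(X^x − X^y)` is a prime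
ideal of `K[M]` if and only if the kernel of the induced `K`-algebra surjection
`K[M] → K[M']` equals the ideal generated by `X^x − X^y`, i.e. iff
`K[M'] ≅ K[M]/(X^x − X^y)`. -/
theorem binomial_prime_iff_ker_eq {m m' : ℕ} (K : Type*) [Field K]
    (M : AddSubmonoid (Fin m → ℤ)) (hMfg : M.FG)
    (M' : AddSubmonoid (Fin m' → ℤ)) (hM'fg : M'.FG)
    (x y : M) (hx : -(x : Fin m → ℤ) ∉ M) (hy : -(y : Fin m → ℤ) ∉ M) (hxy : x ≠ y)
    (φ : M →+ M') (hφsurj : Function.Surjective φ)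
    (hrank : Module.finrank ℤ (Submodule.span ℤ (M' : Set (Fin m' → ℤ))) + 1 =
      Module.finrank ℤ (Submodule.span ℤ (M : Set (Fin m → ℤ))))
    (hφxy : φ x = φ y) :
    (Ideal.span {(single x 1 : AddMonoidAlgebra K M) - single y 1}).IsPrime ↔
      RingHom.ker (mapDomainRingHom K φ) =
        Ideal.span {(single x 1 : AddMonoidAlgebra K M) - single y 1} := by
  classical
  have hgker : (single x 1 : AddMonoidAlgebra K M) - single y 1 ∈
      RingHom.ker (mapDomainRingHom K φ) := BinPrimeAux.binomial_mem_ker φ hφxy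
  have hSker : Ideal.span {(single x 1 : AddMonoidAlgebra K M) - single y 1} ≤
      RingHom.ker (mapDomainRingHom K φ) := by
    rw [Ideal.span_le, Set.singleton_subset_iff]
    exact hgker
  have hmono : ∀ c : M, (single c 1 : AddMonoidAlgebra K M) ∉
      Ideal.span {(single x 1 : AddMonoidAlgebra K M) - single y 1} := by
    intro c hc
    have h0 := hSker hc
    rw [RingHom.mem_ker] at h0
    have h1 : AddMonoidAlgebra.mapDomain (⇑φ) (single c 1 : AddMonoidAlgebra K M) = 0 := h0
    rw [AddMonoidAlgebra.mapDomain_single] at h1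
    exact one_ne_zero (AddMonoidAlgebra.single_eq_zero.mp h1)
  constructor
  · intro hprime
    refine le_antisymm (fun f hf => ?_) hSker
    refine BinPrimeAux.ker_le_span x y φ (fun a b hab => ?_) f hf
    obtain ⟨p0, q0, hp0, heq0⟩ :=
      BinPrimeAux.exists_dep hMfg hM'fg φ hφsurj hrank x y hφxy hxy a b hab
    obtain ⟨p1, q1, hp1, heq1⟩ : ∃ p1 q1 : ℤ, 0 < p1 ∧
        p1 • ((a : Fin m → ℤ) - b) = q1 • ((x : Fin m → ℤ) - y) := by
      rcases hp0.lt_or_gt with h | h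
      · exact ⟨-p0, -q0, by omega, by rw [neg_smul, neg_smul, heq0]⟩
      · exact ⟨p0, q0, h, heq0⟩
    set d : ℕ := Int.gcd p1 q1 with hd
    have hdpos : 0 < (d : ℤ) := by
      have hne : p1 ≠ 0 := ne_of_gt hp1
      exact_mod_cast Nat.pos_of_ne_zero fun h0 => hne (Int.gcd_eq_zero_iff.mp h0).1
    set p2 : ℤ := p1 / d with hp2def
    set q2 : ℤ := q1 / d with hq2def
    have hp2 : (d : ℤ) * p2 = p1 := Int.mul_ediv_cancel' (Int.gcd_dvd_left _ _)
    have hq2 : (d : ℤ) * q2 = q1 := Int.mul_ediv_cancel' (Int.gcd_dvd_right _ _)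
    have heq2 : p2 • ((a : Fin m → ℤ) - b) = q2 • ((x : Fin m → ℤ) - y) := by
      have h3 : (d : ℤ) • (p2 • ((a : Fin m → ℤ) - b)) =
          (d : ℤ) • (q2 • ((x : Fin m → ℤ) - y)) := by
        rw [← mul_smul, ← mul_smul, hp2, hq2]
        exact heq1
      have h4 := sub_eq_zero.mpr h3
      rw [← smul_sub] at h4
      rcases smul_eq_zero.mp h4 with h5 | h5
      · exact absurd h5 (ne_of_gt hdpos)
      · exact sub_eq_zero.mp h5
    have hp2pos : 0 < p2 := by nlinarith
    have hcop : Int.gcd p2 q2 = 1 := by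
      have hdpos' : 0 < Int.gcd p1 q1 := by exact_mod_cast hdpos
      exact Int.gcd_div_gcd_div_gcd hdpos'
    rcases le_or_gt 0 q2 with hq2s | hq2s
    · refine BinPrimeAux.core_binomial x y a b hxy hmono hprime p2.toNat q2.toNat
        (by omega) ?_ ?_
      · show Nat.gcd p2.toNat q2.toNat = 1
        have e1 : p2.toNat = p2.natAbs := by omega
        have e2 : q2.toNat = q2.natAbs := by omega
        rw [e1, e2]
        exact hcop
      · rw [Int.toNat_of_nonneg hp2pos.le, Int.toNat_of_nonneg hq2s]
        exact heq2
    · have hswap : Ideal.span {(single y 1 : AddMonoidAlgebra K M) - single x 1} =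
          Ideal.span {(single x 1 : AddMonoidAlgebra K M) - single y 1} := by
        rw [← Ideal.span_singleton_neg ((single x 1 : AddMonoidAlgebra K M) - single y 1),
          neg_sub]
      have hres := BinPrimeAux.core_binomial y x a b hxy.symm
        (fun c hc => hmono c (hswap ▸ hc)) (hswap ▸ hprime) p2.toNat (-q2).toNat
        (by omega)
        (by
          show Nat.gcd p2.toNat (-q2).toNat = 1
          have e1 : p2.toNat = p2.natAbs := by omega
          have e2 : (-q2).toNat = q2.natAbs := by omega
          rw [e1, e2]
          exact hcop)
        (by
          rw [Int.toNat_of_nonneg hp2pos.le, Int.toNat_of_nonneg (by omega : (0:ℤ) ≤ -q2)]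
          rw [heq2]
          module)
      exact hswap ▸ hres
  · intro hker
    rw [← hker]
    haveI : UniqueSums M' :=
      UniqueSums.of_injective_addHom M'.subtype.toAddHom Subtype.coe_injective inferInstance
    haveI : Nonempty M' := ⟨0⟩
    haveI : IsDomain (AddMonoidAlgebra K M') := NoZeroDivisors.to_isDomain _
    exact RingHom.ker_isPrime _
end

section
/- Let K be a field, let M ⊆ ℤ^m, N ⊆ ℤ^q, and L ⊆ ℤ^p be affine monoids, and let φ : M × N → L be a surjective additive monoid homomorphism with rank L = rank M + rank N − 1. Suppose x ∈ M and y ∈ N satisfy φ(x, 0) = φ(0, y) and (x, y) ≠ (0, 0), that φ(w) ≠ 0 for all nonzero w ∈ M × N, that L is positive (u ∈ L and −u ∈ L imply u = 0), and that φ(x, 0) is unimodular in ℤ^p, i.e., there is a group homomorphism ψ : ℤ^p → ℤ with ψ(φ(x, 0)) = 1. Then: (1) the kernel of the induced surjective K-algebra homomorphism K[M × N] → K[L] (sending X^w to X^{φ(w)}) equals the ideal generated by X^{(x,0)} − X^{(0,y)}, so K[L] ≅ K[M × N]/(X^{(x,0)} − X^{(0,y)}); and (2) for every g ∈ ℤ^p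 the set {w ∈ M × N : φ(w) = g} is finite and (1 if g ∈ L, else 0) = #{w ∈ M × N : φ(w) = g} − #{w ∈ M × N : φ(w) = g − φ(x, 0)}. -/
open AddMonoidAlgebra

private lemma aux_mem_closure_repr {n : ℕ} {S : Finset (Fin n → ℤ)} {v : Fin n → ℤ}
    (hv : v ∈ AddSubmonoid.closure (S : Set (Fin n → ℤ))) :
    ∃ c : (Fin n → ℤ) → ℕ, v = ∑ s ∈ S, c s • s := by
  induction hv using AddSubmonoid.closure_induction with
  | mem z hz =>
      refine ⟨fun s => if s = z then 1 else 0, ?_⟩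
      have h1 : ∀ s ∈ S, (if s = z then 1 else 0) • s = if s = z then s else 0 := by
        intro s _; split <;> simp
      rw [Finset.sum_congr rfl h1, Finset.sum_ite_eq' S z (fun s => s)]
      simp_all
  | zero => exact ⟨fun _ => 0, by simp⟩
  | add z w hz hw ihz ihw =>
      obtain ⟨c1, h1⟩ := ihz
      obtain ⟨c2, h2⟩ := ihw
      refine ⟨fun s => c1 s + c2 s, ?_⟩
      rw [h1, h2, ← Finset.sum_add_distrib]
      exact Finset.sum_congr rfl fun s _ => (add_smul _ _ _).symm

private lemma aux_up {n : ℕ} {P : AddSubmonoid (Fin n → ℤ)} {e : Fin n → ℤ} (he : e ∈ P)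
    {u : Fin n → ℤ} {j j' : ℤ} (hj : u + j • e ∈ P) (h : j ≤ j') : u + j' • e ∈ P := by
  have h3 : ((j' - j).toNat : ℤ) = j' - j := Int.toNat_of_nonneg (by omega)
  have h2 : u + j' • e = (u + j • e) + (j' - j).toNat • e := by
    rw [← natCast_zsmul, h3, sub_smul]; abel
  rw [h2]
  exact P.add_mem hj (AddSubmonoid.nsmul_mem P he _)

private lemma aux_lb {n : ℕ} (P : AddSubmonoid (Fin n → ℤ)) (hfg : P.FG)
    (hpos : ∀ v ∈ P, -v ∈ P → v = 0) {e : Fin n → ℤ} (he : e ∈ P) (he0 : e ≠ 0)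
    (u : Fin n → ℤ) : ∃ a : ℤ, ∀ j : ℤ, u + j • e ∈ P → a ≤ j := by
  by_contra hcon
  push_neg at hcon
  obtain ⟨S, hS⟩ := hfg
  have hdesc : ∀ k : ℕ, u + (-(k : ℤ)) • e ∈ P := by
    intro k
    obtain ⟨j, hj, hlt⟩ := hcon (-(k : ℤ))
    exact aux_up he hj (le_of_lt hlt)
  have hrep : ∀ k : ℕ, ∃ c : (Fin n → ℤ) → ℕ, u + (-(k : ℤ)) • e = ∑ s ∈ S, c s • s :=
    fun k => aux_mem_closure_repr (by rw [hS]; exact hdesc k)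
  choose c hc using hrep
  have hpwo : (Set.univ : Set ({z : Fin n → ℤ // z ∈ S} → ℕ)).IsPWO :=
    Set.isPWO_of_wellQuasiOrderedLE _
  obtain ⟨k, l, hkl, hle⟩ := Set.PartiallyWellOrderedOn.exists_lt hpwo
    (f := fun k (s : {z : Fin n → ℤ // z ∈ S}) => c k s.1) (fun _ => Set.mem_univ _)
  have hptle : ∀ s ∈ S, c k s ≤ c l s := fun s hs => hle ⟨s, hs⟩
  have hsplit : (∑ s ∈ S, c l s • s) = (∑ s ∈ S, c k s • s) + ∑ s ∈ S, (c l s - c k s) • s := by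
    rw [← Finset.sum_add_distrib]
    refine Finset.sum_congr rfl fun s hs => ?_
    rw [← add_smul, Nat.add_sub_cancel' (hptle s hs)]
  have hmem : (∑ s ∈ S, (c l s - c k s) • s) ∈ P := by
    refine AddSubmonoid.sum_mem P fun s hs => AddSubmonoid.nsmul_mem P ?_ _
    rw [← hS]; exact AddSubmonoid.subset_closure hs
  have heq : (∑ s ∈ S, (c l s - c k s) • s) = ((k : ℤ) - l) • e := by
    have h4 : u + (-(l : ℤ)) • e = (u + (-(k : ℤ)) • e) + ∑ s ∈ S, (c l s - c k s) • s := by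
      rw [hc l, hsplit, ← hc k]
    have h5 : ∑ s ∈ S, (c l s - c k s) • s = (u + (-(l : ℤ)) • e) - (u + (-(k : ℤ)) • e) := by
      rw [h4]; abel
    rw [h5, sub_smul, neg_smul, neg_smul]; abel
  have hfin : ((k : ℤ) - l) • e ∈ P := heq ▸ hmem
  have hother : -(((k : ℤ) - l) • e) ∈ P := by
    have h6 : -(((k : ℤ) - l) • e) = ((l - k : ℕ) : ℤ) • e := by
      rw [← neg_smul]
      congr 1
      omega
    rw [h6, natCast_zsmul]
    exact AddSubmonoid.nsmul_mem P he _
  rcases smul_eq_zero.mp (hpos _ hfin hother) with h | h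
  · omega
  · exact he0 h

private lemma aux_span_repr {n : ℕ} (P : AddSubmonoid (Fin n → ℤ)) {z : Fin n → ℤ}
    (hz : z ∈ Submodule.span ℤ (P : Set (Fin n → ℤ))) :
    ∃ a, a ∈ P ∧ ∃ b, b ∈ P ∧ z = a - b := by
  induction hz using Submodule.span_induction with
  | mem z hz => exact ⟨z, hz, 0, P.zero_mem, (sub_zero z).symm⟩
  | zero => exact ⟨0, P.zero_mem, 0, P.zero_mem, (sub_zero 0).symm⟩
  | add z w hz hw ihz ihw =>
      obtain ⟨a, ha, b, hb, rfl⟩ := ihz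
      obtain ⟨a', ha', b', hb', rfl⟩ := ihw
      exact ⟨a + a', P.add_mem ha ha', b + b', P.add_mem hb hb', by abel⟩
  | smul r z hz ih =>
      obtain ⟨a, ha, b, hb, rfl⟩ := ih
      rcases le_or_gt 0 r with h | h
      · refine ⟨r.toNat • a, AddSubmonoid.nsmul_mem P ha _, r.toNat • b,
          AddSubmonoid.nsmul_mem P hb _, ?_⟩
        simp only [← natCast_zsmul, Int.toNat_of_nonneg h]
        rw [smul_sub]
      · refine ⟨(-r).toNat • b, AddSubmonoid.nsmul_mem P hb _, (-r).toNat • a,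
          AddSubmonoid.nsmul_mem P ha _, ?_⟩
        simp only [← natCast_zsmul, Int.toNat_of_nonneg (by omega : (0:ℤ) ≤ -r)]
        rw [smul_sub, neg_smul, neg_smul]
        abel

private def aux_prodSubEquiv {α β : Type*} [AddCommGroup α] [AddCommGroup β]
    (P : Submodule ℤ α) (Q : Submodule ℤ β) : ↥(P.prod Q) ≃ₗ[ℤ] (↥P × ↥Q) where
  toFun z := (⟨z.1.1, (Submodule.mem_prod.mp z.2).1⟩, ⟨z.1.2, (Submodule.mem_prod.mp z.2).2⟩)
  invFun ab := ⟨(ab.1.1, ab.2.1), Submodule.mem_prod.mpr ⟨ab.1.2, ab.2.2⟩⟩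
  map_add' _ _ := rfl
  map_smul' _ _ := rfl
  left_inv _ := rfl
  right_inv _ := rfl

set_option maxHeartbeats 1000000 in
/-- **Corollary 2.5.** Let `K` be a field, `M ⊆ ℤ^m`, `N ⊆ ℤ^q`, `L ⊆ ℤ^p` affine
monoids, and `φ : M ⊕ N → L` a surjective homomorphism with
`rank L = rank M + rank N − 1`.  Suppose `φ(x,0) = φ(0,y)` with `(x,y) ≠ (0,0)`,
`φ(w) ≠ 0` for nonzero `w`, `L` is positive, and `g₀ = φ(x,0)` is unimodular in `ℤ^p`.
Then `K[L] ≅ K[M ⊕ N]/(X^{(x,0)} − X^{(0,y)})` and `H_L = (1 − T^{g₀}) H_{M⊕N}`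
coefficientwise. -/
theorem free_sum_quotient {m q p : ℕ} (K : Type*) [Field K]
    (M : AddSubmonoid (Fin m → ℤ)) (hMfg : M.FG)
    (N : AddSubmonoid (Fin q → ℤ)) (hNfg : N.FG)
    (L : AddSubmonoid (Fin p → ℤ)) (hLfg : L.FG)
    (φ : M × N →+ L) (hφsurj : Function.Surjective φ)
    (hrank : Module.finrank ℤ (Submodule.span ℤ (L : Set (Fin p → ℤ))) + 1 =
      Module.finrank ℤ (Submodule.span ℤ (M : Set (Fin m → ℤ))) +
        Module.finrank ℤ (Submodule.span ℤ (N : Set (Fin q → ℤ))))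
    (x : M) (y : N) (hφxy : φ (x, 0) = φ (0, y)) (hxy0 : (x, y) ≠ (0, 0))
    (hφ0 : ∀ w : M × N, w ≠ 0 → φ w ≠ 0)
    (hLpos : ∀ v : Fin p → ℤ, v ∈ L → -v ∈ L → v = 0)
    (hunimod : ∃ ψ : (Fin p → ℤ) →+ ℤ, ψ ((φ (x, 0) : L) : Fin p → ℤ) = 1) :
    (RingHom.ker (mapDomainRingHom K φ) =
      Ideal.span {(single ((x, 0) : M × N) 1 : AddMonoidAlgebra K (M × N)) -
        single ((0, y) : M × N) 1}) ∧
    ∀ g : Fin p → ℤ,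
      {w : M × N | ((φ w : L) : Fin p → ℤ) = g}.Finite ∧
      Set.indicator (L : Set (Fin p → ℤ)) (fun _ => (1 : ℕ)) g +
          {w : M × N | ((φ w : L) : Fin p → ℤ) =
            g - ((φ (x, 0) : L) : Fin p → ℤ)}.ncard =
        {w : M × N | ((φ w : L) : Fin p → ℤ) = g}.ncard := by
  classical
  obtain ⟨ψ, hψ⟩ := hunimod
  -- the coercion homomorphism
  set cH : M × N →+ (Fin m → ℤ) × (Fin q → ℤ) := AddMonoidHom.prodMap M.subtype N.subtype
    with hcH
  have hcapp : ∀ w : M × N, cH w = ((w.1 : Fin m → ℤ), (w.2 : Fin q → ℤ)) := fun w => rfl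
  have hcinj : Function.Injective cH := by
    intro w w' h
    rw [hcapp, hcapp, Prod.ext_iff] at h
    exact Prod.ext (Subtype.ext h.1) (Subtype.ext h.2)
  -- nontriviality of x and y
  have hx : x ≠ 0 := by
    intro h
    have h0 : ((x, 0) : M × N) = 0 := by rw [h]; rfl
    have hy0 : y ≠ 0 := by
      intro h'
      exact hxy0 (by rw [h, h'])
    refine hφ0 (0, y) (by simp [Prod.ext_iff, hy0]) ?_
    rw [← hφxy, h0, map_zero]
  have hy : y ≠ 0 := by
    intro h
    have h0 : ((0, y) : M × N) = 0 := by rw [h]; rfl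
    have hx0 : x ≠ 0 := by
      intro h'
      exact hxy0 (by rw [h, h'])
    refine hφ0 (x, 0) (by simp [Prod.ext_iff, hx0]) ?_
    rw [hφxy, h0, map_zero]
  have hx' : (x : Fin m → ℤ) ≠ 0 := fun h => hx (Subtype.ext h)
  have hy' : (y : Fin q → ℤ) ≠ 0 := fun h => hy (Subtype.ext h)
  -- positivity of M and N
  have hMpos : ∀ v ∈ M, -v ∈ M → v = 0 := by
    intro v hv hv'
    by_contra h0
    have h1 : φ ((⟨v, hv⟩ : M), 0) ≠ 0 :=
      hφ0 _ (by simp [Prod.ext_iff, Subtype.ext_iff, h0])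
    have h2 : ((φ ((⟨v, hv⟩ : M), 0) : L) : Fin p → ℤ) +
        ((φ ((⟨-v, hv'⟩ : M), 0) : L) : Fin p → ℤ) = 0 := by
      rw [← AddSubmonoid.coe_add, ← map_add]
      have h3 : ((⟨v, hv⟩ : M), (0 : N)) + ((⟨-v, hv'⟩ : M), 0) = 0 := by
        refine Prod.ext (Subtype.ext ?_) (by simp)
        simp
      rw [h3, map_zero]; rfl
    have h4 := hLpos _ (φ ((⟨v, hv⟩ : M), 0)).2 (by rw [neg_eq_of_add_eq_zero_right h2] at *; exact (φ ((⟨-v, hv'⟩ : M), 0)).2)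
    exact h1 (Subtype.ext h4)
  have hNpos : ∀ v ∈ N, -v ∈ N → v = 0 := by
    intro v hv hv'
    by_contra h0
    have h1 : φ (0, (⟨v, hv⟩ : N)) ≠ 0 :=
      hφ0 _ (by simp [Prod.ext_iff, Subtype.ext_iff, h0])
    have h2 : ((φ (0, (⟨v, hv⟩ : N)) : L) : Fin p → ℤ) +
        ((φ (0, (⟨-v, hv'⟩ : N)) : L) : Fin p → ℤ) = 0 := by
      rw [← AddSubmonoid.coe_add, ← map_add]
      have h3 : ((0 : M), (⟨v, hv⟩ : N)) + (0, (⟨-v, hv'⟩ : N)) = 0 := by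
        refine Prod.ext (by simp) (Subtype.ext ?_)
        simp
      rw [h3, map_zero]; rfl
    have h4 := hLpos _ (φ (0, (⟨v, hv⟩ : N))).2 (by rw [neg_eq_of_add_eq_zero_right h2] at *; exact (φ (0, (⟨-v, hv'⟩ : N))).2)
    exact h1 (Subtype.ext h4)
  -- the key kernel element
  set δ : (Fin m → ℤ) × (Fin q → ℤ) := ((x : Fin m → ℤ), -(y : Fin q → ℤ)) with hδdef
  have hδ0 : δ ≠ 0 := by
    intro h
    exact hx' (congrArg Prod.fst h)
  -- submodules
  set PM : Submodule ℤ (Fin m → ℤ) := Submodule.span ℤ (M : Set (Fin m → ℤ)) with hPM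
  set PN : Submodule ℤ (Fin q → ℤ) := Submodule.span ℤ (N : Set (Fin q → ℤ)) with hPN
  set QL : Submodule ℤ (Fin p → ℤ) := Submodule.span ℤ (L : Set (Fin p → ℤ)) with hQL
  set A : Submodule ℤ ((Fin m → ℤ) × (Fin q → ℤ)) := PM.prod PN with hA
  have hmemA : ∀ w : M × N, cH w ∈ A := by
    intro w
    exact ⟨Submodule.subset_span w.1.2, Submodule.subset_span w.2.2⟩
  have hsubA : ∀ w w' : M × N, cH w - cH w' ∈ A := fun w w' =>
    A.sub_mem (hmemA w) (hmemA w')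
  have reprA : ∀ z : ↥A, ∃ w w' : M × N, (z : (Fin m → ℤ) × (Fin q → ℤ)) = cH w - cH w' := by
    rintro ⟨⟨z1, z2⟩, hz⟩
    obtain ⟨a, ha, b, hb, hab⟩ := aux_span_repr M hz.1
    obtain ⟨a', ha', b', hb', hab'⟩ := aux_span_repr N hz.2
    exact ⟨((⟨a, ha⟩ : M), (⟨a', ha'⟩ : N)), ((⟨b, hb⟩ : M), (⟨b', hb'⟩ : N)),
      Prod.ext hab hab'⟩
  choose r1 r2 hr using reprA
  -- well-definedness
  have wd : ∀ w₁ w₂ w₃ w₄ : M × N, cH w₁ - cH w₂ = cH w₃ - cH w₄ →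
      ((φ w₁ : L) : Fin p → ℤ) - ((φ w₂ : L) : Fin p → ℤ) =
        ((φ w₃ : L) : Fin p → ℤ) - ((φ w₄ : L) : Fin p → ℤ) := by
    intro w₁ w₂ w₃ w₄ h
    rw [sub_eq_sub_iff_add_eq_add, ← map_add, ← map_add] at h
    have h2 := congrArg φ (hcinj h)
    rw [map_add, map_add] at h2
    rw [sub_eq_sub_iff_add_eq_add, ← AddSubmonoid.coe_add, ← AddSubmonoid.coe_add, h2]
  set F : ↥A → (Fin p → ℤ) := fun z =>
    ((φ (r1 z) : L) : Fin p → ℤ) - ((φ (r2 z) : L) : Fin p → ℤ) with hF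
  have hFadd : ∀ z z' : ↥A, F (z + z') = F z + F z' := by
    intro z z'
    have h : cH (r1 (z + z')) - cH (r2 (z + z')) = cH (r1 z + r1 z') - cH (r2 z + r2 z') := by
      rw [← hr (z + z'), map_add, map_add]
      have e2 : ((z + z' : ↥A) : (Fin m → ℤ) × (Fin q → ℤ)) = (z : _) + (z' : _) := rfl
      rw [e2, hr z, hr z']
      abel
    have h2 := wd _ _ _ _ h
    rw [hF]
    simp only []
    rw [h2, map_add, map_add, AddSubmonoid.coe_add, AddSubmonoid.coe_add]
    abel
  set Φ : ↥A →ₗ[ℤ] (Fin p → ℤ) := (AddMonoidHom.mk' F hFadd).toIntLinearMap with hΦdef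
  have hΦ : ∀ (w w' : M × N) (h : cH w - cH w' ∈ A),
      Φ ⟨cH w - cH w', h⟩ = ((φ w : L) : Fin p → ℤ) - ((φ w' : L) : Fin p → ℤ) := by
    intro w w' h
    refine wd _ _ _ _ ?_
    rw [← hr ⟨cH w - cH w', h⟩]
  have hΦw : ∀ (w : M × N) (h : cH w ∈ A), Φ ⟨cH w, h⟩ = ((φ w : L) : Fin p → ℤ) := by
    intro w h
    have h1 : cH w = cH w - cH 0 := by rw [map_zero, sub_zero]
    have h2 : Φ ⟨cH w, h⟩ = Φ ⟨cH w - cH 0, h1 ▸ h⟩ := by congr 1; exact Subtype.ext h1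
    rw [h2, hΦ w 0, map_zero]
    simp
  -- range of Φ
  have hrange : LinearMap.range Φ = QL := by
    apply le_antisymm
    · rintro _ ⟨z, rfl⟩
      have : Φ z = ((φ (r1 z) : L) : Fin p → ℤ) - ((φ (r2 z) : L) : Fin p → ℤ) := rfl
      rw [this]
      exact QL.sub_mem (Submodule.subset_span (φ (r1 z)).2) (Submodule.subset_span (φ (r2 z)).2)
    · rw [hQL, Submodule.span_le]
      intro l hl
      obtain ⟨w, hw⟩ := hφsurj ⟨l, hl⟩
      rw [SetLike.mem_coe, LinearMap.mem_range]
      exact ⟨⟨cH w, hmemA w⟩, by rw [hΦw, hw]⟩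
  -- rank bookkeeping
  haveI : Module.Finite ℤ ↥PM := Module.Finite.iff_fg.mpr (IsNoetherian.noetherian PM)
  haveI : Module.Finite ℤ ↥PN := Module.Finite.iff_fg.mpr (IsNoetherian.noetherian PN)
  haveI : Module.Finite ℤ ↥QL := Module.Finite.iff_fg.mpr (IsNoetherian.noetherian QL)
  haveI : Module.Finite ℤ ↥A := Module.Finite.iff_fg.mpr (IsNoetherian.noetherian A)
  have hrankA : Module.rank ℤ ↥A = Module.rank ℤ ↥PM + Module.rank ℤ ↥PN := by
    rw [(aux_prodSubEquiv PM PN).rank_eq, rank_prod']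
  have hrn := LinearMap.rank_range_add_rank_ker Φ
  rw [hrange, hrankA] at hrn
  have hfin1 : (Module.finrank ℤ ↥PM : Cardinal) = Module.rank ℤ ↥PM := Module.finrank_eq_rank ℤ _
  have hfin2 : (Module.finrank ℤ ↥PN : Cardinal) = Module.rank ℤ ↥PN := Module.finrank_eq_rank ℤ _
  have hfin3 : (Module.finrank ℤ ↥QL : Cardinal) = Module.rank ℤ ↥QL := Module.finrank_eq_rank ℤ _
  have hkerrank : Module.rank ℤ ↥(LinearMap.ker Φ) = 1 := by
    have h1 : Module.rank ℤ ↥QL + Module.rank ℤ ↥(LinearMap.ker Φ) =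
        Module.rank ℤ ↥QL + 1 := by
      rw [hrn, ← hfin1, ← hfin2, ← hfin3, ← Nat.cast_add, ← hrank]
      push_cast
      ring
    have h2 : Module.rank ℤ ↥QL < Cardinal.aleph0 := Module.rank_lt_aleph0 ℤ _
    exact Cardinal.eq_of_add_eq_add_left h1 h2
  -- the two kernel elements trick
  have hδA : δ ∈ A := by
    have h1 : δ = cH (x, 0) - cH (0, y) := by
      rw [hcapp, hcapp]
      refine Prod.ext ?_ ?_ <;> simp [hδdef]
    rw [h1]; exact hsubA _ _
  have hδker : Φ ⟨δ, hδA⟩ ∈ ({0} : Set (Fin p → ℤ)) := by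
    have h1 : δ = cH (x, 0) - cH (0, y) := by
      rw [hcapp, hcapp]
      refine Prod.ext ?_ ?_ <;> simp [hδdef]
    have h2 : Φ ⟨δ, hδA⟩ = Φ ⟨cH (x, 0) - cH (0, y), hsubA _ _⟩ := by congr 1; exact Subtype.ext h1
    rw [h2, hΦ, hφxy, sub_self]
    rfl
  have hkey : ∀ w w' : M × N, φ w = φ w' → ∃ j : ℤ, cH w' = cH w + j • δ := by
    intro w w' hww
    have hdA : cH w' - cH w ∈ A := hsubA w' w
    have hdker : (⟨cH w' - cH w, hdA⟩ : ↥A) ∈ LinearMap.ker Φ := by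
      rw [LinearMap.mem_ker, hΦ, hww, sub_self]
    have hδker' : (⟨δ, hδA⟩ : ↥A) ∈ LinearMap.ker Φ := by
      rw [LinearMap.mem_ker]
      simpa using hδker
    have hdep : ¬ LinearIndependent ℤ
        ![(⟨⟨cH w' - cH w, hdA⟩, hdker⟩ : ↥(LinearMap.ker Φ)), ⟨⟨δ, hδA⟩, hδker'⟩] := by
      intro hind
      have := hind.cardinal_le_rank
      rw [hkerrank, Cardinal.mk_fintype] at this
      simp at this
    rw [LinearIndependent.pair_iff] at hdep
    push_neg at hdep
    obtain ⟨s, t, hst, hne⟩ := hdep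
    have hG : s • (cH w' - cH w) + t • δ = 0 := by
      have := congrArg (fun z : ↥(LinearMap.ker Φ) => ((z : ↥A) : (Fin m → ℤ) × (Fin q → ℤ))) hst
      simpa using this
    have hs : s ≠ 0 := by
      intro h
      rw [h, zero_smul, zero_add] at hG
      rcases smul_eq_zero.mp hG with h' | h'
      · exact hne h h'
      · exact hδ0 h'
    -- first components
    have h1 : s • ((w'.1 : Fin m → ℤ) - (w.1 : Fin m → ℤ)) + t • (x : Fin m → ℤ) = 0 := by
      have := congrArg Prod.fst hG
      simpa [hcapp, hδdef] using this
    -- evaluate the unimodular functional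
    have hz1 : (((w'.1 : Fin m → ℤ) - (w.1 : Fin m → ℤ), (0 : Fin q → ℤ)) :
        (Fin m → ℤ) × (Fin q → ℤ)) ∈ A :=
      ⟨PM.sub_mem (Submodule.subset_span w'.1.2) (Submodule.subset_span w.1.2), PN.zero_mem⟩
    have hzx : (((x : Fin m → ℤ), (0 : Fin q → ℤ)) : (Fin m → ℤ) × (Fin q → ℤ)) ∈ A :=
      ⟨Submodule.subset_span x.2, PN.zero_mem⟩
    have hΦx : Φ ⟨((x : Fin m → ℤ), (0 : Fin q → ℤ)), hzx⟩ = ((φ (x, 0) : L) : Fin p → ℤ) := by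
      have h2 : (((x : Fin m → ℤ), (0 : Fin q → ℤ)) : (Fin m → ℤ) × (Fin q → ℤ)) = cH (x, 0) := by
        rw [hcapp]; rfl
      have h3 : Φ ⟨((x : Fin m → ℤ), (0 : Fin q → ℤ)), hzx⟩ = Φ ⟨cH (x, 0), h2 ▸ hzx⟩ :=
        congrArg Φ (Subtype.ext h2)
      exact h3.trans (hΦw (x, 0) _)
    set E : ℤ := ψ (Φ ⟨((w'.1 : Fin m → ℤ) - (w.1 : Fin m → ℤ), (0 : Fin q → ℤ)), hz1⟩) with hE
    have hcomb : s • E + t = 0 := by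
      have h5 : s • (⟨((w'.1 : Fin m → ℤ) - (w.1 : Fin m → ℤ), (0 : Fin q → ℤ)), hz1⟩ : ↥A) +
          t • ⟨((x : Fin m → ℤ), (0 : Fin q → ℤ)), hzx⟩ = 0 := by
        refine Subtype.ext ?_
        simp only [Submodule.coe_add, SetLike.val_smul, ZeroMemClass.coe_zero, Prod.smul_mk,
          Prod.mk_add_mk, Prod.mk_eq_zero]
        refine ⟨?_, ?_⟩
        · simpa using h1
        · simp
      have h6 := congrArg (fun z => ψ (Φ z)) h5
      simp only [map_add, map_smul, map_zsmul, map_zero] at h6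
      rw [hΦx, hψ] at h6
      rw [hE]
      simpa [smul_eq_mul] using h6
    refine ⟨E, ?_⟩
    have hcomb' : s * E + t = 0 := by simpa [smul_eq_mul] using hcomb
    have h8 : (s * E : ℤ) = -t := by linarith
    have h7 : s • (cH w' - cH w - E • δ) = 0 := by
      rw [smul_sub, smul_smul, h8, neg_smul, sub_neg_eq_add, hG]
    rcases smul_eq_zero.mp h7 with h | h
    · exact absurd h hs
    · exact sub_eq_iff_eq_add'.mp (sub_eq_zero.mp h)
  
  -- transfer along the chain: same fiber
  have hfib0 : ∀ (w w' : M × N) (k : ℕ), cH w' = cH w + (k : ℤ) • δ → φ w' = φ w := by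
    intro w w' k h
    have h1 : w' + k • ((0 : M), y) = w + k • (x, (0 : N)) := by
      apply hcinj
      rw [map_add, map_add, AddMonoidHom.map_nsmul, AddMonoidHom.map_nsmul, h]
      rw [hcapp ((0 : M), y), hcapp (x, (0 : N))]
      refine Prod.ext ?_ ?_
      · simp [hδdef, Prod.smul_mk]
      · simp only [Prod.fst_add, Prod.snd_add, Prod.smul_mk, hδdef]
        simp [smul_neg]
    have h2 := congrArg φ h1
    rw [map_add, map_add, map_nsmul, map_nsmul, hφxy] at h2
    have h3 := congrArg (fun l : L => (l : Fin p → ℤ)) h2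
    simp only [AddSubmonoid.coe_add] at h3
    exact Subtype.ext (by exact add_right_cancel h3)
  have hfib : ∀ (w w' : M × N) (j : ℤ), cH w' = cH w + j • δ →
      ((φ w' : L) : Fin p → ℤ) = ((φ w : L) : Fin p → ℤ) := by
    intro w w' j h
    rcases le_or_gt 0 j with hj | hj
    · have h1 : cH w' = cH w + (j.toNat : ℤ) • δ := by
        rw [Int.toNat_of_nonneg hj]; exact h
      rw [hfib0 w w' j.toNat h1]
    · have h1 : cH w = cH w' + ((-j).toNat : ℤ) • δ := by
        rw [Int.toNat_of_nonneg (by omega : (0:ℤ) ≤ -j), h, neg_smul]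
        abel
      rw [hfib0 w' w (-j).toNat h1]
  -- notation for the fibers
  set g₀ : Fin p → ℤ := ((φ (x, 0) : L) : Fin p → ℤ) with hg₀
  have hg₀' : ((φ (0, y) : L) : Fin p → ℤ) = g₀ := by rw [hg₀, hφxy]
  -- Part 2: counting
  have hcount : ∀ g : Fin p → ℤ,
      {w : M × N | ((φ w : L) : Fin p → ℤ) = g}.Finite ∧
      Set.indicator (L : Set (Fin p → ℤ)) (fun _ => (1 : ℕ)) g +
          {w : M × N | ((φ w : L) : Fin p → ℤ) = g - g₀}.ncard =
        {w : M × N | ((φ w : L) : Fin p → ℤ) = g}.ncard := by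
    intro g
    set Sg : Set (M × N) := {w : M × N | ((φ w : L) : Fin p → ℤ) = g} with hSg
    set Sg' : Set (M × N) := {w : M × N | ((φ w : L) : Fin p → ℤ) = g - g₀} with hSg'
    rcases Set.eq_empty_or_nonempty Sg with hempty | ⟨w₀, hw₀⟩
    · have hnotin : g ∉ L := by
        intro hg
        obtain ⟨w, hw⟩ := hφsurj ⟨g, hg⟩
        have : w ∈ Sg := by rw [hSg, Set.mem_setOf_eq, hw]
        rw [hempty] at this
        exact this
      have hempty' : Sg' = ∅ := by
        rw [Set.eq_empty_iff_forall_notMem]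
        intro w'' hw''
        have h1 : w'' + (x, 0) ∈ Sg := by
          rw [hSg, Set.mem_setOf_eq, map_add, AddSubmonoid.coe_add, hw'']
          rw [← hg₀]
          abel
        rw [hempty] at h1
        exact h1
      rw [hempty, hempty']
      refine ⟨Set.finite_empty, ?_⟩
      rw [Set.indicator_of_notMem (by simpa using hnotin)]
      simp
    · -- nonempty case
      have hgL : g ∈ L := by rw [← hw₀]; exact (φ w₀).2
      set u : Fin m → ℤ := (w₀.1 : Fin m → ℤ) with hu
      set v : Fin q → ℤ := (w₀.2 : Fin q → ℤ) with hv
      obtain ⟨a, ha⟩ := aux_lb M hMfg hMpos x.2 hx' u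
      obtain ⟨a', ha'⟩ := aux_lb N hNfg hNpos y.2 hy' v
      set Jset : Set ℤ := {j : ℤ | u + j • (x : Fin m → ℤ) ∈ M ∧
        v - j • (y : Fin q → ℤ) ∈ N} with hJset
      have hJ0 : (0 : ℤ) ∈ Jset := by
        constructor <;> simp [hu, hv, w₀.1.2, w₀.2.2]
      have hJsub : Jset ⊆ Set.Icc a (-a') := by
        rintro j ⟨h1, h2⟩
        refine ⟨ha j h1, ?_⟩
        have h3 : v + (-j) • (y : Fin q → ℤ) ∈ N := by
          rw [neg_smul, ← sub_eq_add_neg]; exact h2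
        have := ha' (-j) h3
        omega
      have hJfin : Jset.Finite := (Set.finite_Icc a (-a')).subset hJsub
      have hJne : hJfin.toFinset.Nonempty := ⟨0, hJfin.mem_toFinset.mpr hJ0⟩
      set a₀ : ℤ := hJfin.toFinset.min' hJne with ha₀def
      set b₀ : ℤ := hJfin.toFinset.max' hJne with hb₀def
      have ha₀ : a₀ ∈ Jset := hJfin.mem_toFinset.mp (hJfin.toFinset.min'_mem hJne)
      have hb₀ : b₀ ∈ Jset := hJfin.mem_toFinset.mp (hJfin.toFinset.max'_mem hJne)
      have ha₀0 : a₀ ≤ 0 := hJfin.toFinset.min'_le 0 (hJfin.mem_toFinset.mpr hJ0)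
      have hb₀0 : (0 : ℤ) ≤ b₀ := hJfin.toFinset.le_max' 0 (hJfin.mem_toFinset.mpr hJ0)
      have hIcc : Jset = Set.Icc a₀ b₀ := by
        apply le_antisymm
        · intro j hj
          exact ⟨hJfin.toFinset.min'_le j (hJfin.mem_toFinset.mpr hj),
            hJfin.toFinset.le_max' j (hJfin.mem_toFinset.mpr hj)⟩
        · rintro j ⟨h1, h2⟩
          constructor
          · exact aux_up x.2 ha₀.1 h1
          · have h3 : v + (-b₀) • (y : Fin q → ℤ) ∈ N := by
              rw [neg_smul, ← sub_eq_add_neg]; exact hb₀.2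
            have h4 := aux_up y.2 h3 (by omega : -b₀ ≤ -j)
            rw [neg_smul, ← sub_eq_add_neg] at h4
            exact h4
      -- the parametrization of the fiber
      set el : ℤ → (Fin m → ℤ) × (Fin q → ℤ) :=
        fun j => (u + j • (x : Fin m → ℤ), v - j • (y : Fin q → ℤ)) with hel
      have hel_inj : Function.Injective el := by
        intro i j h
        have h2 := congrArg Prod.snd h
        simp only [hel] at h2
        have h3 : i • (y : Fin q → ℤ) = j • (y : Fin q → ℤ) := sub_right_inj.mp h2
        have h4 : (i - j) • (y : Fin q → ℤ) = 0 := by rw [sub_smul, h3, sub_self]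
        rcases smul_eq_zero.mp h4 with h5 | h5
        · omega
        · exact absurd h5 hy'
      have hcel : ∀ j : ℤ, el j = cH w₀ + j • δ := by
        intro j
        rw [hel, hcapp, hδdef]
        refine Prod.ext rfl ?_
        show v - j • (y : Fin q → ℤ) = v + j • (-(y : Fin q → ℤ))
        rw [smul_neg, ← sub_eq_add_neg]
      have himg : ⇑cH '' Sg = el '' Set.Icc a₀ b₀ := by
        apply Set.eq_of_subset_of_subset
        · rintro z ⟨w', hw', rfl⟩
          have hww : φ w' = φ w₀ := by
            have e1 : ((φ w' : L) : Fin p → ℤ) = g := hw'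
            have e2 : ((φ w₀ : L) : Fin p → ℤ) = g := hw₀
            exact Subtype.ext (e1.trans e2.symm)
          obtain ⟨j, hj⟩ := hkey w₀ w' hww.symm
          have hjel : cH w' = el j := by rw [hj, hcel]
          refine ⟨j, ?_, hjel.symm⟩
          rw [← hIcc]
          constructor
          · have h1 : (w'.1 : Fin m → ℤ) = u + j • (x : Fin m → ℤ) := congrArg Prod.fst hjel
            rw [← h1]; exact w'.1.2
          · have h2 : (w'.2 : Fin q → ℤ) = v - j • (y : Fin q → ℤ) := congrArg Prod.snd hjel
            rw [← h2]; exact w'.2.2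
        · rintro z ⟨j, hjIcc, rfl⟩
          have hjJ : j ∈ Jset := by rw [hIcc]; exact hjIcc
          refine ⟨((⟨u + j • (x : Fin m → ℤ), hjJ.1⟩ : M),
            (⟨v - j • (y : Fin q → ℤ), hjJ.2⟩ : N)), ?_, rfl⟩
          have e2 : ((φ w₀ : L) : Fin p → ℤ) = g := hw₀
          show ((φ (((⟨u + j • (x : Fin m → ℤ), hjJ.1⟩ : M),
            (⟨v - j • (y : Fin q → ℤ), hjJ.2⟩ : N)) : M × N) : L) : Fin p → ℤ) = g
          rw [hfib w₀ _ j (by rw [← hcel j]; rfl), e2]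
      have hSgfin : Sg.Finite := by
        refine Set.Finite.of_finite_image ?_ hcinj.injOn
        rw [himg]
        exact (Set.finite_Icc _ _).image _
      have hSgcard : Sg.ncard = (b₀ + 1 - a₀).toNat := by
        have h1 : (⇑cH '' Sg).ncard = Sg.ncard := Set.ncard_image_of_injective _ hcinj
        rw [himg, Set.ncard_image_of_injective _ hel_inj, ← Finset.coe_Icc,
          Set.ncard_coe_finset, Int.card_Icc] at h1
        exact h1.symm
      -- the shifted fiber
      set el' : ℤ → (Fin m → ℤ) × (Fin q → ℤ) :=
        fun j => (u + (j - 1) • (x : Fin m → ℤ), v - j • (y : Fin q → ℤ)) with hel'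
      have hel'_inj : Function.Injective el' := by
        intro i j h
        have h2 := congrArg Prod.snd h
        simp only [hel'] at h2
        have h3 : i • (y : Fin q → ℤ) = j • (y : Fin q → ℤ) := sub_right_inj.mp h2
        have h4 : (i - j) • (y : Fin q → ℤ) = 0 := by rw [sub_smul, h3, sub_self]
        rcases smul_eq_zero.mp h4 with h5 | h5
        · omega
        · exact absurd h5 hy'
      have himg' : ⇑cH '' Sg' = el' '' Set.Icc (a₀ + 1) b₀ := by
        apply Set.eq_of_subset_of_subset
        · rintro z ⟨w'', hw'', rfl⟩
          have hin1 : w'' + (x, 0) ∈ Sg := by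
            show ((φ (w'' + (x, 0)) : L) : Fin p → ℤ) = g
            rw [map_add, AddSubmonoid.coe_add, hw'']
            show g - g₀ + g₀ = g
            abel
          have hin2 : w'' + (0, y) ∈ Sg := by
            show ((φ (w'' + (0, y)) : L) : Fin p → ℤ) = g
            rw [map_add, AddSubmonoid.coe_add, hw'', hg₀']
            show g - g₀ + g₀ = g
            abel
          have h1 : cH (w'' + (x, 0)) ∈ el '' Set.Icc a₀ b₀ := by
            rw [← himg]; exact ⟨w'' + (x, 0), hin1, rfl⟩
          have h2 : cH (w'' + (0, y)) ∈ el '' Set.Icc a₀ b₀ := by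
            rw [← himg]; exact ⟨w'' + (0, y), hin2, rfl⟩
          obtain ⟨j, hjIcc, hj⟩ := h1
          obtain ⟨i, hiIcc, hi⟩ := h2
          -- second components
          have hj2 : (w''.2 : Fin q → ℤ) = v - j • (y : Fin q → ℤ) := by
            have := congrArg Prod.snd hj
            simpa [hel, hcapp] using this.symm
          have hi2 : (w''.2 : Fin q → ℤ) + (y : Fin q → ℤ) = v - i • (y : Fin q → ℤ) := by
            have := congrArg Prod.snd hi
            simpa [hel, hcapp] using this.symm
          have hij : j = i + 1 := by
            have h3 : v - j • (y : Fin q → ℤ) + (y : Fin q → ℤ) = v - i • (y : Fin q → ℤ) := by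
              rw [← hj2]; exact hi2
            have h3' : (v - j • (y : Fin q → ℤ)) + (y : Fin q → ℤ) -
                (v - i • (y : Fin q → ℤ)) = 0 := by rw [h3, sub_self]
            have h4 : (i + 1 - j) • (y : Fin q → ℤ) = 0 := by
              rw [sub_smul, add_smul, one_smul, ← h3']
              abel
            rcases smul_eq_zero.mp h4 with h5 | h5
            · omega
            · exact absurd h5 hy'
          have hj1 : (w''.1 : Fin m → ℤ) + (x : Fin m → ℤ) = u + j • (x : Fin m → ℤ) := by
            have := congrArg Prod.fst hj
            simpa [hel, hcapp] using this.symm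
          refine ⟨j, ⟨by have := hiIcc.1; omega, hjIcc.2⟩, ?_⟩
          show el' j = cH w''
          rw [hel', hcapp]
          refine Prod.ext ?_ hj2.symm
          · show u + (j - 1) • (x : Fin m → ℤ) = (w''.1 : Fin m → ℤ)
            have h6 : (w''.1 : Fin m → ℤ) = u + j • (x : Fin m → ℤ) - (x : Fin m → ℤ) := by
              rw [← hj1]; abel
            rw [h6, sub_smul, one_smul]
            abel
        · rintro z ⟨j, hjIcc, rfl⟩
          have hjm : (j - 1 : ℤ) ∈ Jset := by
            rw [hIcc]
            exact ⟨by have := hjIcc.1; omega, by have := hjIcc.2; omega⟩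
          have hjJ : j ∈ Jset := by
            rw [hIcc]
            exact ⟨by have := hjIcc.1; omega, hjIcc.2⟩
          set w'' : M × N := ((⟨u + (j - 1) • (x : Fin m → ℤ), hjm.1⟩ : M),
            (⟨v - j • (y : Fin q → ℤ), hjJ.2⟩ : N)) with hw''def
          set wj : M × N := ((⟨u + j • (x : Fin m → ℤ), hjJ.1⟩ : M),
            (⟨v - j • (y : Fin q → ℤ), hjJ.2⟩ : N)) with hwjdef
          have hsum : w'' + (x, 0) = wj := by
            refine Prod.ext (Subtype.ext ?_) (Subtype.ext ?_)
            · show u + (j - 1) • (x : Fin m → ℤ) + (x : Fin m → ℤ) =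
                u + j • (x : Fin m → ℤ)
              rw [sub_smul, one_smul]; abel
            · show v - j • (y : Fin q → ℤ) + 0 = v - j • (y : Fin q → ℤ)
              rw [add_zero]
          have e2 : ((φ w₀ : L) : Fin p → ℤ) = g := hw₀
          have hwjSg : ((φ wj : L) : Fin p → ℤ) = g := by
            rw [hfib w₀ wj j (by rw [← hcel j]; rfl), e2]
          have hw''Sg' : w'' ∈ Sg' := by
            show ((φ w'' : L) : Fin p → ℤ) = g - g₀
            have h1 : ((φ (w'' + (x, 0)) : L) : Fin p → ℤ) = g := by rw [hsum]; exact hwjSg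
            rw [map_add, AddSubmonoid.coe_add] at h1
            exact eq_sub_of_add_eq h1
          exact ⟨w'', hw''Sg', rfl⟩
      have hSg'card : Sg'.ncard = (b₀ + 1 - (a₀ + 1)).toNat := by
        have h1 : (⇑cH '' Sg').ncard = Sg'.ncard := Set.ncard_image_of_injective _ hcinj
        rw [himg', Set.ncard_image_of_injective _ hel'_inj, ← Finset.coe_Icc,
          Set.ncard_coe_finset, Int.card_Icc] at h1
        exact h1.symm
      refine ⟨hSgfin, ?_⟩
      rw [hSgcard, hSg'card, Set.indicator_of_mem (by exact hgL) (fun _ => (1 : ℕ))]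
      have hab : a₀ ≤ b₀ := le_trans ha₀0 hb₀0
      omega
  -- Part 1: the kernel
  set bgen : AddMonoidAlgebra K (M × N) :=
    single ((x, 0) : M × N) 1 - single ((0, y) : M × N) 1 with hbgen
  have haux : ∀ (k : ℕ) (w w' : M × N), cH w' = cH w + (k : ℤ) • δ →
      (single w 1 - single w' 1 : AddMonoidAlgebra K (M × N)) ∈ Ideal.span {bgen} := by
    intro k
    induction k with
    | zero =>
        intro w w' h
        have h1 : w = w' := hcinj (by simpa using h.symm)
        rw [h1, sub_self]
        exact Ideal.zero_mem _
    | succ k ih =>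
        intro w w' h
        have hm1 : (w.1 : Fin m → ℤ) + (x : Fin m → ℤ) ∈ M := M.add_mem w.1.2 x.2
        have hw'2 : (w'.2 : Fin q → ℤ) =
            (w.2 : Fin q → ℤ) - ((k : ℤ) + 1) • (y : Fin q → ℤ) := by
          have h2 := congrArg Prod.snd h
          simp only [hcapp, Prod.snd_add, Prod.smul_snd, hδdef, smul_neg] at h2
          rw [h2]
          push_cast
          rw [← sub_eq_add_neg]
        have hn1 : (w.2 : Fin q → ℤ) - (y : Fin q → ℤ) ∈ N := by
          have h2 : (w.2 : Fin q → ℤ) - (y : Fin q → ℤ) =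
              (w'.2 : Fin q → ℤ) + (k : ℤ) • (y : Fin q → ℤ) := by
            rw [hw'2, add_smul, one_smul]
            abel
          rw [h2, natCast_zsmul]
          exact N.add_mem w'.2.2 (AddSubmonoid.nsmul_mem N y.2 k)
        set w₁ : M × N := ((⟨(w.1 : Fin m → ℤ) + (x : Fin m → ℤ), hm1⟩ : M),
          (⟨(w.2 : Fin q → ℤ) - (y : Fin q → ℤ), hn1⟩ : N)) with hw₁def
        have hw₁ : cH w₁ = cH w + δ := by
          rw [hcapp, hcapp, hδdef]
          refine Prod.ext rfl ?_
          show (w.2 : Fin q → ℤ) - (y : Fin q → ℤ) = (w.2 : Fin q → ℤ) + -(y : Fin q → ℤ)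
          rw [sub_eq_add_neg]
        set t : M × N := (w.1, (⟨(w.2 : Fin q → ℤ) - (y : Fin q → ℤ), hn1⟩ : N)) with htdef
        have ht1 : ((0 : M), y) + t = w := by
          refine Prod.ext (Subtype.ext ?_) (Subtype.ext ?_)
          · show (0 : Fin m → ℤ) + (w.1 : Fin m → ℤ) = (w.1 : Fin m → ℤ)
            rw [zero_add]
          · show (y : Fin q → ℤ) + ((w.2 : Fin q → ℤ) - (y : Fin q → ℤ)) = (w.2 : Fin q → ℤ)
            abel
        have ht2 : ((x, (0 : N)) : M × N) + t = w₁ := by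
          refine Prod.ext (Subtype.ext ?_) (Subtype.ext ?_)
          · show (x : Fin m → ℤ) + (w.1 : Fin m → ℤ) =
              (w.1 : Fin m → ℤ) + (x : Fin m → ℤ)
            abel
          · show (0 : Fin q → ℤ) + ((w.2 : Fin q → ℤ) - (y : Fin q → ℤ)) =
              (w.2 : Fin q → ℤ) - (y : Fin q → ℤ)
            rw [zero_add]
        have hstep : (single w 1 - single w₁ 1 : AddMonoidAlgebra K (M × N)) ∈
            Ideal.span {bgen} := by
          have hmul : bgen * single t 1 = single w₁ 1 - single w 1 := by
            rw [hbgen, sub_mul, single_mul_single, single_mul_single, one_mul, ht1, ht2]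
          have h3 : (single w 1 - single w₁ 1 : AddMonoidAlgebra K (M × N)) =
              -(bgen * single t 1) := by rw [hmul]; abel
          rw [h3]
          exact neg_mem (Ideal.mul_mem_right _ _ (Ideal.subset_span rfl))
        have hrec : cH w' = cH w₁ + (k : ℤ) • δ := by
          rw [hw₁, h]
          push_cast
          rw [add_smul, one_smul]
          abel
        have h4 := ih w₁ w' hrec
        have h5 : (single w 1 - single w' 1 : AddMonoidAlgebra K (M × N)) =
            (single w 1 - single w₁ 1) + (single w₁ 1 - single w' 1) := by abel
        rw [h5]
        exact add_mem hstep h4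
  have hchain : ∀ w w' : M × N, φ w = φ w' →
      (single w 1 - single w' 1 : AddMonoidAlgebra K (M × N)) ∈ Ideal.span {bgen} := by
    intro w w' hww
    obtain ⟨j, hj⟩ := hkey w w' hww
    rcases le_or_gt 0 j with hjn | hjn
    · refine haux j.toNat w w' ?_
      rw [Int.toNat_of_nonneg hjn]
      exact hj
    · have h1 : cH w = cH w' + ((-j).toNat : ℤ) • δ := by
        rw [Int.toNat_of_nonneg (by omega : (0 : ℤ) ≤ -j), hj, neg_smul]
        abel
      have h2 := haux (-j).toNat w' w h1
      have h3 : (single w 1 - single w' 1 : AddMonoidAlgebra K (M × N)) =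
          -(single w' 1 - single w 1) := by abel
      rw [h3]
      exact neg_mem h2
  refine ⟨?_, hcount⟩
  apply le_antisymm
  · intro f hf
    rw [RingHom.mem_ker] at hf
    have hf' : Finsupp.mapDomain (⇑φ) f.coeff = 0 := congrArg AddMonoidAlgebra.coeff hf
    set σ : M × N → M × N := fun w => Function.surjInv hφsurj (φ w) with hσdef
    have hσ : ∀ w, φ (σ w) = φ w := fun w => Function.surjInv_eq hφsurj (φ w)
    have hmap0 : Finsupp.mapDomain σ f.coeff = 0 := by
      have h1 : Finsupp.mapDomain σ f.coeff =
          Finsupp.mapDomain (Function.surjInv hφsurj) (Finsupp.mapDomain (⇑φ) f.coeff) := by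
        rw [← Finsupp.mapDomain_comp]
        rfl
      rw [h1, hf', Finsupp.mapDomain_zero]
    have hdecomp : (f.coeff.sum fun w k =>
        (single w k - single (σ w) k : AddMonoidAlgebra K (M × N))) = f := by
      rw [Finsupp.sum_sub, AddMonoidAlgebra.sum_coeff_single]
      have h2 : (f.coeff.sum fun w k => (single (σ w) k : AddMonoidAlgebra K (M × N))) =
          AddMonoidAlgebra.ofCoeff (Finsupp.mapDomain σ f.coeff) := by
        simp only [Finsupp.mapDomain, AddMonoidAlgebra.ofCoeff_finsuppSum,
          AddMonoidAlgebra.ofCoeff_single]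
      rw [h2, hmap0, AddMonoidAlgebra.ofCoeff_zero, sub_zero]
    rw [← hdecomp]
    refine AddSubmonoidClass.finsuppSum_mem (Ideal.span {bgen}) f.coeff _ fun w hw => ?_
    have h3 : (single w (f.coeff w) - single (σ w) (f.coeff w) : AddMonoidAlgebra K (M × N)) =
        single (0 : M × N) (f.coeff w) * (single w 1 - single (σ w) 1) := by
      rw [mul_sub, single_mul_single, single_mul_single, zero_add, zero_add, mul_one]
    rw [h3]
    exact Ideal.mul_mem_left _ _ (hchain w (σ w) (hσ w).symm)
  · rw [Ideal.span_le]
    intro z hz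
    rw [Set.mem_singleton_iff] at hz
    subst hz
    rw [SetLike.mem_coe, RingHom.mem_ker, map_sub]
    have h1 : (mapDomainRingHom K φ) (single ((x, 0) : M × N) 1) =
        single (φ (x, 0)) (1 : K) := AddMonoidAlgebra.mapDomain_single
    have h2 : (mapDomainRingHom K φ) (single ((0, y) : M × N) 1) =
        single (φ (0, y)) (1 : K) := AddMonoidAlgebra.mapDomain_single
    rw [h1, h2, hφxy, sub_self]
end

section
/- Let K be a field and let A, B ⊆ ℤ^m be finite subsets such that A ∪ B is the free sum of A and B, i.e., 0 ∈ A ∩ B and the ℝ-linear spans of A and B in ℝ^m intersect only in 0. Let x = ((0,1), 0) and y = (0, (0,1)) in M(A) × M(B). Then the kernel of the surjective K-algebra homomorphism K[M(A) × M(B)] → K[M(A ∪ B)] induced by the addition map ℤ^{m+1} × ℤ^{m+1} → ℤ^{m+1}, (u, v) ↦ u + v, equals the ideal generated by X^x − X^y; that is, K[M(A ∪ B)] ≅ K[M(A) × M(B)]/(X^x − X^y). -/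
open AddMonoidAlgebra

/-- For `A ⊆ ℤ^m`, `M(A)` is the submonoid of `ℤ^{m+1} = ℤ^m × ℤ` generated by the
elements `(a, 1)`, `a ∈ A`. -/
def MofSet {m : ℕ} (A : Set (Fin m → ℤ)) : AddSubmonoid ((Fin m → ℤ) × ℤ) :=
  AddSubmonoid.closure ((fun a => (a, (1 : ℤ))) '' A)

/-- The monoid homomorphism `M(A) ⊕ M(B) → M(A ∪ B)` induced by addition in `ℤ^{m+1}`. -/
def sumHom {m : ℕ} (A B : Set (Fin m → ℤ)) : MofSet A × MofSet B →+ MofSet (A ∪ B) where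
  toFun w := ⟨(w.1 : (Fin m → ℤ) × ℤ) + (w.2 : (Fin m → ℤ) × ℤ),
    add_mem
      (AddSubmonoid.closure_mono (Set.image_mono Set.subset_union_left) w.1.2)
      (AddSubmonoid.closure_mono (Set.image_mono Set.subset_union_right) w.2.2)⟩
  map_zero' := by apply Subtype.ext; simp
  map_add' a b := by apply Subtype.ext; push_cast; exact add_add_add_comm _ _ _ _

/-- Generic: kernel of `mapDomainRingHom` is contained in any ideal containing all
binomial relations. -/
lemma ker_le_of_binomials {K G H : Type*} [Field K] [AddCommMonoid G] [AddCommMonoid H]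
    (f : G →+ H) (I : Ideal (AddMonoidAlgebra K G))
    (hI : ∀ u v : G, f u = f v → (single u 1 - single v 1 : AddMonoidAlgebra K G) ∈ I) :
    RingHom.ker (mapDomainRingHom K f) ≤ I := by
  classical
  have key : ∀ (u : G) (c : K), mapDomainRingHom K f (single u c) = single (f u) c :=
    fun u c => AddMonoidAlgebra.mapDomain_single
  suffices H : ∀ n (p : AddMonoidAlgebra K G), p.coeff.support.card ≤ n →
      mapDomainRingHom K f p = 0 → p ∈ I by
    intro p hp
    exact H p.coeff.support.card p le_rfl hp
  intro n
  induction n with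
  | zero =>
    intro p hcard hp
    have : p = 0 := by
      rwa [Nat.le_zero, Finset.card_eq_zero, Finsupp.support_eq_empty, coeff_eq_zero] at hcard
    simp [this]
  | succ n ih =>
    intro p hcard hp
    rcases eq_or_ne p 0 with rfl | hne
    · exact zero_mem I
    obtain ⟨a, ha⟩ := Finsupp.support_nonempty_iff.mpr (mt coeff_eq_zero.mp hne)
    -- find b in support with b ≠ a and f b = f a
    have hfiber : ∃ b ∈ p.coeff.support, b ≠ a ∧ f b = f a := by
      by_contra hcon
      push_neg at hcon
      have hsum : (Finsupp.mapDomain f p.coeff) (f a) = ∑ x ∈ p.coeff.support,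
          if f x = f a then p.coeff x else 0 := by
        rw [Finsupp.mapDomain, Finsupp.sum_apply]
        rw [Finsupp.sum]
        refine Finset.sum_congr rfl fun x _ => ?_
        rw [Finsupp.single_apply]
      have hz : Finsupp.mapDomain f p.coeff = 0 := by
        exact congrArg AddMonoidAlgebra.coeff hp
      rw [hz] at hsum
      have : (0 : K) = p.coeff a := by
        rw [Finsupp.coe_zero, Pi.zero_apply] at hsum
        rw [hsum, Finset.sum_eq_single a (fun x hx hxa => by
          rw [if_neg]; intro h; exact hcon x hx hxa h) (fun h => (h ha).elim)]
        rw [if_pos rfl]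
      exact Finsupp.mem_support_iff.mp ha this.symm
    obtain ⟨b, hb, hba, hfb⟩ := hfiber
    set c : K := p.coeff a with hc
    set r : AddMonoidAlgebra K G := single a c - single b c with hr
    have hrI : r ∈ I := by
      have : r = single (0 : G) c * (single a 1 - single b 1) := by
        rw [mul_sub, single_mul_single, single_mul_single, zero_add, zero_add,
          mul_one, hr]
      rw [this]
      exact Ideal.mul_mem_left I _ (hI a b hfb.symm)
    have hrker : mapDomainRingHom K f r = 0 := by
      rw [hr, map_sub, key, key, hfb, sub_self]
    set q : AddMonoidAlgebra K G := p - r with hq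
    have hqker : mapDomainRingHom K f q = 0 := by rw [hq, map_sub, hp, hrker, sub_self]
    have hqsupp : q.coeff.support ⊆ p.coeff.support.erase a := by
      intro x hx
      have hxa : x ≠ a := by
        intro h; subst h
        apply Finsupp.mem_support_iff.mp hx
        show (p.coeff - (Finsupp.single x c - Finsupp.single b c)) x = 0
        rw [Finsupp.sub_apply, Finsupp.sub_apply, Finsupp.single_eq_same,
          Finsupp.single_eq_of_ne' hba, sub_zero, hc, sub_self]
      refine Finset.mem_erase.mpr ⟨hxa, ?_⟩
      rcases eq_or_ne x b with rfl | hxb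
      · exact hb
      · have : q.coeff x = p.coeff x := by
          show (p.coeff - (Finsupp.single a c - Finsupp.single b c)) x = p.coeff x
          rw [Finsupp.sub_apply, Finsupp.sub_apply, Finsupp.single_eq_of_ne' (Ne.symm hxa),
            Finsupp.single_eq_of_ne' (Ne.symm hxb)]
          ring
        exact Finsupp.mem_support_iff.mpr (this ▸ Finsupp.mem_support_iff.mp hx)
    have hqcard : q.coeff.support.card ≤ n := by
      calc q.coeff.support.card ≤ (p.coeff.support.erase a).card := Finset.card_le_card hqsupp
        _ ≤ p.coeff.support.card - 1 := le_of_eq (Finset.card_erase_of_mem ha)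
        _ ≤ n := by omega
    have : p = q + r := by rw [hq]; ring
    rw [this]
    exact add_mem (ih q hqcard hqker) hrI

/-- Componentwise cast `ℤ^m → ℝ^m` as an additive monoid hom. -/
def intCastPi (m : ℕ) : (Fin m → ℤ) →+ (Fin m → ℝ) where
  toFun z i := (z i : ℝ)
  map_zero' := by funext i; simp
  map_add' a b := by funext i; simp

lemma intCastPi_injective (m : ℕ) : Function.Injective (intCastPi m) := by
  intro a b h
  funext i
  exact Int.cast_injective (congrFun h i)

lemma fst_mem_span {m : ℕ} (A : Set (Fin m → ℤ)) {u : (Fin m → ℤ) × ℤ}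
    (hu : u ∈ MofSet A) :
    intCastPi m u.1 ∈ Submodule.span ℝ ((fun (z : Fin m → ℤ) (i : Fin m) => (z i : ℝ)) '' A) := by
  refine AddSubmonoid.closure_induction ?_ ?_ ?_ hu
  · rintro x ⟨a, ha, rfl⟩
    exact Submodule.subset_span ⟨a, ha, rfl⟩
  · simpa using (Submodule.span ℝ ((fun (z : Fin m → ℤ) (i : Fin m) => (z i : ℝ)) '' A)).zero_mem
  · intro x y _ _ hx hy
    have : intCastPi m (x + y).1 = intCastPi m x.1 + intCastPi m y.1 := by
      rw [← map_add]; rfl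
    rw [this]
    exact add_mem hx hy

/-- `X^x - X^y` divides `X^{d•x} - X^{d•y}`. -/
lemma single_nsmul_sub_dvd {K G : Type*} [Field K] [AddCommMonoid G] (x y : G) (d : ℕ) :
    (single x 1 - single y 1 : AddMonoidAlgebra K G) ∣
      single (d • x) 1 - single (d • y) 1 := by
  have key : ∀ (a b : G), (single a 1 * single b 1 : AddMonoidAlgebra K G) = single (a + b) 1 :=
    fun a b => by rw [single_mul_single, one_mul]
  induction d with
  | zero => simp
  | succ d ih =>
    have heq : (single ((d + 1) • x) 1 - single ((d + 1) • y) 1 : AddMonoidAlgebra K G)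
        = single (d • x) 1 * (single x 1 - single y 1)
          + single y 1 * (single (d • x) 1 - single (d • y) 1) := by
      rw [mul_sub, mul_sub, key, key, key, key, succ_nsmul, succ_nsmul,
        add_comm y (d • x), add_comm y (d • y)]
      ring
    rw [heq]
    exact dvd_add (Dvd.dvd.mul_left dvd_rfl _) (ih.mul_left _)

lemma nsmul_zero_one {m : ℕ} (d : ℕ) :
    d • (((0 : Fin m → ℤ), (1 : ℤ))) = ((0 : Fin m → ℤ), (d : ℤ)) := by
  induction d with
  | zero => simp; rfl
  | succ d ih => rw [succ_nsmul, ih]; simp [Prod.ext_iff]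

section Main

variable {m : ℕ} (K : Type*) [Field K] (A B : Set (Fin m → ℤ))

/-- The binomial relation ideal. -/
lemma binomial_mem_aux
    (hspan : Submodule.span ℝ ((fun (z : Fin m → ℤ) (i : Fin m) => (z i : ℝ)) '' A) ⊓
      Submodule.span ℝ ((fun (z : Fin m → ℤ) (i : Fin m) => (z i : ℝ)) '' B) = ⊥)
    (hx : ((0 : Fin m → ℤ), (1 : ℤ)) ∈ MofSet A)
    (hy : ((0 : Fin m → ℤ), (1 : ℤ)) ∈ MofSet B)
    (u v : MofSet A × MofSet B) (huv : sumHom A B u = sumHom A B v)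
    (hle : (v.1 : (Fin m → ℤ) × ℤ).2 ≤ ((u.1 : (Fin m → ℤ) × ℤ)).2) :
    (single u 1 - single v 1 : AddMonoidAlgebra K (MofSet A × MofSet B)) ∈
      Ideal.span {(single ((⟨((0 : Fin m → ℤ), (1 : ℤ)), hx⟩, 0) : MofSet A × MofSet B) 1 :
          AddMonoidAlgebra K (MofSet A × MofSet B)) -
        single ((0, ⟨((0 : Fin m → ℤ), (1 : ℤ)), hy⟩) : MofSet A × MofSet B) 1} := by
  have hval : ((u.1 : (Fin m → ℤ) × ℤ)) + (u.2 : (Fin m → ℤ) × ℤ)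
      = ((v.1 : (Fin m → ℤ) × ℤ)) + (v.2 : (Fin m → ℤ) × ℤ) := congrArg Subtype.val huv
  have h1 : (u.1 : (Fin m → ℤ) × ℤ).1 + (u.2 : (Fin m → ℤ) × ℤ).1
      = (v.1 : (Fin m → ℤ) × ℤ).1 + (v.2 : (Fin m → ℤ) × ℤ).1 := congrArg Prod.fst hval
  have h2 : (u.1 : (Fin m → ℤ) × ℤ).2 + (u.2 : (Fin m → ℤ) × ℤ).2
      = (v.1 : (Fin m → ℤ) × ℤ).2 + (v.2 : (Fin m → ℤ) × ℤ).2 := congrArg Prod.snd hval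
  -- first components agree
  have hA1 : (u.1 : (Fin m → ℤ) × ℤ).1 = (v.1 : (Fin m → ℤ) × ℤ).1 := by
    have hdiff : intCastPi m (u.1 : (Fin m → ℤ) × ℤ).1 - intCastPi m (v.1 : (Fin m → ℤ) × ℤ).1
        = intCastPi m (v.2 : (Fin m → ℤ) × ℤ).1 - intCastPi m (u.2 : (Fin m → ℤ) × ℤ).1 := by
      rw [← map_sub, ← map_sub]
      congr 1
      rw [sub_eq_sub_iff_add_eq_add, h1, add_comm]
    have hmA : intCastPi m (u.1 : (Fin m → ℤ) × ℤ).1 - intCastPi m (v.1 : (Fin m → ℤ) × ℤ).1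
        ∈ Submodule.span ℝ ((fun (z : Fin m → ℤ) (i : Fin m) => (z i : ℝ)) '' A) :=
      sub_mem (fst_mem_span A u.1.2) (fst_mem_span A v.1.2)
    have hmB : intCastPi m (u.1 : (Fin m → ℤ) × ℤ).1 - intCastPi m (v.1 : (Fin m → ℤ) × ℤ).1
        ∈ Submodule.span ℝ ((fun (z : Fin m → ℤ) (i : Fin m) => (z i : ℝ)) '' B) := by
      rw [hdiff]
      exact sub_mem (fst_mem_span B v.2.2) (fst_mem_span B u.2.2)
    have h0 : intCastPi m (u.1 : (Fin m → ℤ) × ℤ).1 - intCastPi m (v.1 : (Fin m → ℤ) × ℤ).1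
        = 0 := by
      have := hspan ▸ Submodule.mem_inf.mpr ⟨hmA, hmB⟩
      simp only [Submodule.mem_bot] at this
      exact this
    exact intCastPi_injective m (sub_eq_zero.mp h0)
  have hB1 : (u.2 : (Fin m → ℤ) × ℤ).1 = (v.2 : (Fin m → ℤ) × ℤ).1 := by
    rw [hA1] at h1
    exact add_left_cancel h1
  -- the shift
  set d : ℕ := ((u.1 : (Fin m → ℤ) × ℤ).2 - (v.1 : (Fin m → ℤ) × ℤ).2).toNat with hdd
  have hd : (d : ℤ) = (u.1 : (Fin m → ℤ) × ℤ).2 - (v.1 : (Fin m → ℤ) × ℤ).2 :=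
    Int.toNat_of_nonneg (sub_nonneg.mpr hle)
  set xel : MofSet A × MofSet B := (⟨((0 : Fin m → ℤ), (1 : ℤ)), hx⟩, 0) with hxel
  set yel : MofSet A × MofSet B := (0, ⟨((0 : Fin m → ℤ), (1 : ℤ)), hy⟩) with hyel
  set w : MofSet A × MofSet B := (v.1, u.2) with hw
  have hu : u = w + d • xel := by
    have hd1 : u.1 = v.1 + d • (⟨((0 : Fin m → ℤ), (1 : ℤ)), hx⟩ : MofSet A) := by
      apply Subtype.ext
      push_cast
      rw [nsmul_zero_one]
      rw [Prod.ext_iff]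
      constructor
      · simpa using hA1
      · show (u.1 : (Fin m → ℤ) × ℤ).2 = (v.1 : (Fin m → ℤ) × ℤ).2 + (d : ℤ)
        omega
    have : w + d • xel = (v.1 + d • (⟨((0 : Fin m → ℤ), (1 : ℤ)), hx⟩ : MofSet A), u.2) := by
      rw [hw, hxel, Prod.ext_iff]
      constructor
      · rfl
      · show u.2 + d • (0 : MofSet B) = u.2
        simp
    rw [this, ← hd1]
  have hv : v = w + d • yel := by
    have hd2 : v.2 = u.2 + d • (⟨((0 : Fin m → ℤ), (1 : ℤ)), hy⟩ : MofSet B) := by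
      apply Subtype.ext
      push_cast
      rw [nsmul_zero_one]
      rw [Prod.ext_iff]
      constructor
      · simpa using hB1.symm
      · show (v.2 : (Fin m → ℤ) × ℤ).2 = (u.2 : (Fin m → ℤ) × ℤ).2 + (d : ℤ)
        omega
    have : w + d • yel = (v.1, u.2 + d • (⟨((0 : Fin m → ℤ), (1 : ℤ)), hy⟩ : MofSet B)) := by
      rw [hw, hyel, Prod.ext_iff]
      constructor
      · show v.1 + d • (0 : MofSet A) = v.1
        simp
      · rfl
    rw [this, ← hd2]
  have key : ∀ (a b : MofSet A × MofSet B),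
      (single a 1 * single b 1 : AddMonoidAlgebra K (MofSet A × MofSet B)) = single (a + b) 1 :=
    fun a b => by rw [single_mul_single, one_mul]
  have heq : (single u 1 - single v 1 : AddMonoidAlgebra K (MofSet A × MofSet B))
      = single w 1 * (single (d • xel) 1 - single (d • yel) 1) := by
    rw [mul_sub, key, key, hu, hv]
  rw [heq, Ideal.mem_span_singleton]
  exact Dvd.dvd.mul_left (single_nsmul_sub_dvd xel yel d) _

lemma binomial_mem
    (hspan : Submodule.span ℝ ((fun (z : Fin m → ℤ) (i : Fin m) => (z i : ℝ)) '' A) ⊓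
      Submodule.span ℝ ((fun (z : Fin m → ℤ) (i : Fin m) => (z i : ℝ)) '' B) = ⊥)
    (hx : ((0 : Fin m → ℤ), (1 : ℤ)) ∈ MofSet A)
    (hy : ((0 : Fin m → ℤ), (1 : ℤ)) ∈ MofSet B)
    (u v : MofSet A × MofSet B) (huv : sumHom A B u = sumHom A B v) :
    (single u 1 - single v 1 : AddMonoidAlgebra K (MofSet A × MofSet B)) ∈
      Ideal.span {(single ((⟨((0 : Fin m → ℤ), (1 : ℤ)), hx⟩, 0) : MofSet A × MofSet B) 1 :
          AddMonoidAlgebra K (MofSet A × MofSet B)) -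
        single ((0, ⟨((0 : Fin m → ℤ), (1 : ℤ)), hy⟩) : MofSet A × MofSet B) 1} := by
  rcases le_total ((v.1 : (Fin m → ℤ) × ℤ)).2 ((u.1 : (Fin m → ℤ) × ℤ)).2 with h | h
  · exact binomial_mem_aux K A B hspan hx hy u v huv h
  · have := binomial_mem_aux K A B hspan hx hy v u huv.symm h
    have hneg : (single u 1 - single v 1 : AddMonoidAlgebra K (MofSet A × MofSet B))
        = -(single v 1 - single u 1) := by ring
    rw [hneg]
    exact neg_mem this

lemma sumHom_surjective : Function.Surjective (sumHom A B) := by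
  have main : ∀ x ∈ MofSet (A ∪ B), ∃ u : MofSet A × MofSet B,
      ((sumHom A B u : (Fin m → ℤ) × ℤ)) = x := by
    intro x hx
    refine AddSubmonoid.closure_induction ?_ ?_ ?_ hx
    · rintro _ ⟨a, ha | ha, rfl⟩
      · exact ⟨(⟨(a, 1), AddSubmonoid.subset_closure ⟨a, ha, rfl⟩⟩, 0), by
          show (a, (1 : ℤ)) + (0 : (Fin m → ℤ) × ℤ) = (a, 1); simp⟩
      · exact ⟨(0, ⟨(a, 1), AddSubmonoid.subset_closure ⟨a, ha, rfl⟩⟩), by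
          show (0 : (Fin m → ℤ) × ℤ) + (a, (1 : ℤ)) = (a, 1); simp⟩
    · exact ⟨0, by show (0 : (Fin m → ℤ) × ℤ) + 0 = 0; simp⟩
    · rintro x y _ _ ⟨ux, hux⟩ ⟨uy, huy⟩
      refine ⟨ux + uy, ?_⟩
      rw [map_add]
      push_cast
      rw [hux, huy]
  rintro ⟨x, hx⟩
  obtain ⟨u, hu⟩ := main x hx
  exact ⟨u, Subtype.ext hu⟩

end Main

/-- **Corollary 2.6(1).** Let `A, B ⊆ ℤ^m` be finite sets such that `A ∪ B` is the free
sum of `A` and `B` (`0 ∈ A ∩ B` and `ℝA ∩ ℝB = 0`).  With `x = ((0,1), 0)` and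
`y = (0, (0,1))` in `M(A) ⊕ M(B)`, the kernel of the surjection
`K[M(A) ⊕ M(B)] → K[M(A ∪ B)]` induced by addition is generated by `X^x − X^y`, i.e.
`K[M(A ∪ B)] ≅ K[M(A) ⊕ M(B)]/(X^x − X^y)`. -/
theorem free_sum_pointconfig_ker {m : ℕ} (K : Type*) [Field K]
    (A B : Set (Fin m → ℤ)) (hAfin : A.Finite) (hBfin : B.Finite)
    (h0A : (0 : Fin m → ℤ) ∈ A) (h0B : (0 : Fin m → ℤ) ∈ B)
    (hspan : Submodule.span ℝ ((fun (z : Fin m → ℤ) (i : Fin m) => (z i : ℝ)) '' A) ⊓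
      Submodule.span ℝ ((fun (z : Fin m → ℤ) (i : Fin m) => (z i : ℝ)) '' B) = ⊥) :
    Function.Surjective (mapDomainRingHom K (sumHom A B)) ∧
    RingHom.ker (mapDomainRingHom K (sumHom A B)) =
      Ideal.span {(single ((⟨((0 : Fin m → ℤ), (1 : ℤ)), AddSubmonoid.subset_closure
            ⟨0, h0A, rfl⟩⟩, 0) : MofSet A × MofSet B) 1 : AddMonoidAlgebra K (MofSet A × MofSet B)) -
          single ((0, ⟨((0 : Fin m → ℤ), (1 : ℤ)), AddSubmonoid.subset_closure
            ⟨0, h0B, rfl⟩⟩) : MofSet A × MofSet B) 1} := by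
  classical
  have key : ∀ (u : MofSet A × MofSet B) (c : K),
      mapDomainRingHom K (sumHom A B) (single u c) = single (sumHom A B u) c :=
    fun u c => AddMonoidAlgebra.mapDomain_single
  constructor
  · -- surjectivity
    intro q
    induction q using AddMonoidAlgebra.induction with
    | zero => exact ⟨0, map_zero _⟩
    | single_add a b q _ _ ih =>
      obtain ⟨u, hu⟩ := sumHom_surjective A B a
      obtain ⟨p, hp⟩ := ih
      exact ⟨single u b + p, by rw [map_add, key, hu, hp]⟩
  · apply le_antisymm
    · apply ker_le_of_binomials
      intro u v huv
      exact binomial_mem K A B hspan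
        (AddSubmonoid.subset_closure ⟨0, h0A, rfl⟩)
        (AddSubmonoid.subset_closure ⟨0, h0B, rfl⟩) u v huv
    · rw [Ideal.span_le, Set.singleton_subset_iff]
      rw [SetLike.mem_coe, RingHom.mem_ker, map_sub, key, key]
      have : sumHom A B ((⟨((0 : Fin m → ℤ), (1 : ℤ)), AddSubmonoid.subset_closure
            ⟨0, h0A, rfl⟩⟩, 0) : MofSet A × MofSet B)
          = sumHom A B ((0, ⟨((0 : Fin m → ℤ), (1 : ℤ)), AddSubmonoid.subset_closure
            ⟨0, h0B, rfl⟩⟩) : MofSet A × MofSet B) := by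
        apply Subtype.ext
        show (((0 : Fin m → ℤ), (1 : ℤ)) : (Fin m → ℤ) × ℤ) + 0
          = (0 : (Fin m → ℤ) × ℤ) + ((0 : Fin m → ℤ), (1 : ℤ))
        simp
      rw [this, sub_self]
end

section
/- Let A, B ⊆ ℤ^m be finite subsets such that A ∪ B is the free sum of A and B, i.e., 0 ∈ A ∩ B and the ℝ-linear spans of A and B in ℝ^m intersect only in 0. Then for every g ∈ ℤ^{m+1} the set {(u, v) ∈ M(A) × M(B) : u + v = g} is finite and (1 if g ∈ M(A ∪ B), else 0) = #{(u, v) ∈ M(A) × M(B) : u + v = g} − #{(u, v) ∈ M(A) × M(B) : u + v = g − (0, 1)}, where (0,1) ∈ ℤ^m × ℤ = ℤ^{m+1}. -/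
namespace FreeSumAux

variable {m : ℕ}

/-- The coordinatewise cast `ℤ^m → ℝ^m` as an additive monoid hom. -/
def cH (m : ℕ) : (Fin m → ℤ) →+ (Fin m → ℝ) where
  toFun z := fun i => (z i : ℝ)
  map_zero' := by funext i; simp
  map_add' x y := by funext i; simp

lemma cH_injective : Function.Injective (cH m) := fun x y h =>
  funext fun i => Int.cast_injective (congrFun h i)

lemma snd_nonneg {A : Set (Fin m → ℤ)} {u : (Fin m → ℤ) × ℤ} (hu : u ∈ MofSet A) :
    0 ≤ u.2 := by
  induction hu using AddSubmonoid.closure_induction with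
  | mem x hx => obtain ⟨a, _, rfl⟩ := hx; norm_num
  | zero => norm_num
  | add x y hx hy px py => simpa using add_nonneg px py

lemma fst_mem_span {A : Set (Fin m → ℤ)} {u : (Fin m → ℤ) × ℤ} (hu : u ∈ MofSet A) :
    (cH m) u.1 ∈ Submodule.span ℝ ((cH m) '' A) := by
  induction hu using AddSubmonoid.closure_induction with
  | mem x hx =>
      obtain ⟨a, ha, rfl⟩ := hx
      exact Submodule.subset_span ⟨a, ha, rfl⟩
  | zero => simpa using Submodule.zero_mem _
  | add x y hx hy px py =>
      have : (cH m) (x + y).1 = (cH m) x.1 + (cH m) y.1 := by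
        simp [Prod.fst_add]
      rw [this]; exact Submodule.add_mem _ px py

lemma zero_one_mem {A : Set (Fin m → ℤ)} (h0 : (0 : Fin m → ℤ) ∈ A) :
    ((0 : Fin m → ℤ), (1 : ℤ)) ∈ MofSet A :=
  AddSubmonoid.subset_closure ⟨0, h0, rfl⟩

/-- Uniqueness of the decomposition: the `ℤ^m`-parts are determined. -/
lemma fst_unique {A B : Set (Fin m → ℤ)}
    (hspan : Submodule.span ℝ ((cH m) '' A) ⊓ Submodule.span ℝ ((cH m) '' B) = ⊥)
    {u u' v v' : (Fin m → ℤ) × ℤ}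
    (hu : u ∈ MofSet A) (hu' : u' ∈ MofSet A)
    (hv : v ∈ MofSet B) (hv' : v' ∈ MofSet B)
    (h : u + v = u' + v') : u.1 = u'.1 := by
  have h1 : u.1 + v.1 = u'.1 + v'.1 := congrArg Prod.fst h
  have h2 : (cH m) u.1 + (cH m) v.1 = (cH m) u'.1 + (cH m) v'.1 := by
    rw [← map_add, ← map_add, h1]
  have hA : (cH m) u.1 - (cH m) u'.1 ∈ Submodule.span ℝ ((cH m) '' A) :=
    Submodule.sub_mem _ (fst_mem_span hu) (fst_mem_span hu')
  have hB : (cH m) u.1 - (cH m) u'.1 ∈ Submodule.span ℝ ((cH m) '' B) := by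
    have : (cH m) u.1 - (cH m) u'.1 = (cH m) v'.1 - (cH m) v.1 := by
      linear_combination h2
    rw [this]
    exact Submodule.sub_mem _ (fst_mem_span hv') (fst_mem_span hv)
  have : (cH m) u.1 - (cH m) u'.1 ∈ (⊥ : Submodule ℝ (Fin m → ℝ)) := by
    rw [← hspan]; exact ⟨hA, hB⟩
  have h0 : (cH m) u.1 = (cH m) u'.1 :=
    sub_eq_zero.mp ((Submodule.mem_bot ℝ).mp this)
  exact cH_injective h0

end FreeSumAux

/-- **Corollary 2.6(2).** Let `A, B ⊆ ℤ^m` be finite sets such that `A ∪ B` is the free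
sum of `A` and `B`.  Then `ℍ_{M(A ∪ B)} = (1 − T_{m+1}) ℍ_{M(A)} ℍ_{M(B)}`; equivalently,
coefficientwise: for every `g ∈ ℤ^{m+1}`, the set of pairs `(u, v) ∈ M(A) × M(B)` with
`u + v = g` is finite and
`[g ∈ M(A ∪ B)] = #{(u,v) : u + v = g} − #{(u,v) : u + v = g − (0,1)}`. -/
theorem free_sum_pointconfig_hilbert {m : ℕ}
    (A B : Set (Fin m → ℤ)) (hAfin : A.Finite) (hBfin : B.Finite)
    (h0A : (0 : Fin m → ℤ) ∈ A) (h0B : (0 : Fin m → ℤ) ∈ B)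
    (hspan : Submodule.span ℝ ((fun (z : Fin m → ℤ) (i : Fin m) => (z i : ℝ)) '' A) ⊓
      Submodule.span ℝ ((fun (z : Fin m → ℤ) (i : Fin m) => (z i : ℝ)) '' B) = ⊥) :
    ∀ g : (Fin m → ℤ) × ℤ,
      {w : MofSet A × MofSet B |
        ((w.1 : (Fin m → ℤ) × ℤ) + (w.2 : (Fin m → ℤ) × ℤ)) = g}.Finite ∧
      Set.indicator (MofSet (A ∪ B) : Set ((Fin m → ℤ) × ℤ)) (fun _ => (1 : ℕ)) g +
          {w : MofSet A × MofSet B |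
            ((w.1 : (Fin m → ℤ) × ℤ) + (w.2 : (Fin m → ℤ) × ℤ)) =
              g - ((0 : Fin m → ℤ), (1 : ℤ))}.ncard =
        {w : MofSet A × MofSet B |
          ((w.1 : (Fin m → ℤ) × ℤ) + (w.2 : (Fin m → ℤ) × ℤ)) = g}.ncard := by
  classical
  open FreeSumAux in
  have hspan' : Submodule.span ℝ ((cH m) '' A) ⊓ Submodule.span ℝ ((cH m) '' B) = ⊥ :=
    hspan
  -- the family of sliced solution sets
  let P : ((Fin m → ℤ) × ℤ) → Set (MofSet A × MofSet B) :=
    fun h => {w : MofSet A × MofSet B |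
      ((w.1 : (Fin m → ℤ) × ℤ) + (w.2 : (Fin m → ℤ) × ℤ)) = h}
  let F : MofSet A × MofSet B → ℤ := fun w => (w.1 : (Fin m → ℤ) × ℤ).2
  have key_inj : ∀ h : (Fin m → ℤ) × ℤ, Set.InjOn F (P h) := by
    intro h w hw w' hw' hFe
    have hsum : ((w.1 : (Fin m → ℤ) × ℤ) + (w.2 : (Fin m → ℤ) × ℤ))
        = ((w'.1 : (Fin m → ℤ) × ℤ) + (w'.2 : (Fin m → ℤ) × ℤ)) := hw.trans hw'.symm
    have h1 : (w.1 : (Fin m → ℤ) × ℤ).1 = (w'.1 : (Fin m → ℤ) × ℤ).1 :=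
      fst_unique hspan' w.1.2 w'.1.2 w.2.2 w'.2.2 hsum
    have hu : (w.1 : (Fin m → ℤ) × ℤ) = (w'.1 : (Fin m → ℤ) × ℤ) := Prod.ext h1 hFe
    have hv : (w.2 : (Fin m → ℤ) × ℤ) = (w'.2 : (Fin m → ℤ) × ℤ) := by
      rw [hu] at hsum; exact add_left_cancel hsum
    exact Prod.ext (Subtype.ext hu) (Subtype.ext hv)
  have key_fin : ∀ h : (Fin m → ℤ) × ℤ, (P h).Finite := by
    intro h
    apply Set.Finite.of_finite_image ?_ (key_inj h)
    apply (Set.finite_Icc (0 : ℤ) h.2).subset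
    rintro k ⟨w, hw, rfl⟩
    have h2 : (w.1 : (Fin m → ℤ) × ℤ).2 + (w.2 : (Fin m → ℤ) × ℤ).2 = h.2 := by
      have := congrArg Prod.snd hw; simpa using this
    have ha := snd_nonneg w.1.2
    have hb := snd_nonneg w.2.2
    simp only [Set.mem_Icc]
    constructor
    · exact ha
    · show (w.1 : (Fin m → ℤ) × ℤ).2 ≤ h.2
      omega
  intro g
  refine ⟨key_fin g, ?_⟩
  show Set.indicator (MofSet (A ∪ B) : Set ((Fin m → ℤ) × ℤ)) (fun _ => (1 : ℕ)) g +
      (P (g - ((0 : Fin m → ℤ), (1 : ℤ)))).ncard = (P g).ncard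
  rcases Set.eq_empty_or_nonempty (P g) with hemp | ⟨w0, hw0⟩
  · -- empty case
    have hemp' : P (g - ((0 : Fin m → ℤ), (1 : ℤ))) = ∅ := by
      rw [Set.eq_empty_iff_forall_notMem]
      rintro w hw
      have habel : (w.1 : (Fin m → ℤ) × ℤ) + ((w.2 : (Fin m → ℤ) × ℤ)
          + ((0 : Fin m → ℤ), (1 : ℤ)))
          = ((w.1 : (Fin m → ℤ) × ℤ) + (w.2 : (Fin m → ℤ) × ℤ))
            + ((0 : Fin m → ℤ), (1 : ℤ)) := by abel
      have hmem : (⟨w.1, ⟨(w.2 : (Fin m → ℤ) × ℤ) + ((0 : Fin m → ℤ), (1 : ℤ)),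
          add_mem w.2.2 (zero_one_mem h0B)⟩⟩ : MofSet A × MofSet B) ∈ P g := by
        show (w.1 : (Fin m → ℤ) × ℤ) + ((w.2 : (Fin m → ℤ) × ℤ)
            + ((0 : Fin m → ℤ), (1 : ℤ))) = g
        rw [habel, hw]
        exact sub_add_cancel g _
      rw [hemp] at hmem; exact hmem
    have hnot : g ∉ (MofSet (A ∪ B) : Set ((Fin m → ℤ) × ℤ)) := by
      intro hg
      have hsup : g ∈ MofSet A ⊔ MofSet B := by
        have heq : MofSet (A ∪ B) = MofSet A ⊔ MofSet B := by
          unfold MofSet; rw [Set.image_union, AddSubmonoid.closure_union]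
        rw [SetLike.mem_coe, heq] at hg; exact hg
      obtain ⟨u, hu, v, hv, huv⟩ := AddSubmonoid.mem_sup.mp hsup
      have hmem : (⟨⟨u, hu⟩, ⟨v, hv⟩⟩ : MofSet A × MofSet B) ∈ P g := huv
      rw [hemp] at hmem; exact hmem
    rw [Set.indicator_of_notMem hnot, hemp, hemp']
    simp
  · -- nonempty case
    have hgmem : g ∈ (MofSet (A ∪ B) : Set ((Fin m → ℤ) × ℤ)) := by
      have hA' : MofSet A ≤ MofSet (A ∪ B) :=
        AddSubmonoid.closure_mono (Set.image_mono Set.subset_union_left)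
      have hB' : MofSet B ≤ MofSet (A ∪ B) :=
        AddSubmonoid.closure_mono (Set.image_mono Set.subset_union_right)
      have hm := add_mem (hA' w0.1.2) (hB' w0.2.2)
      rw [SetLike.mem_coe]
      rwa [hw0] at hm
    rw [Set.indicator_of_mem hgmem]
    -- the shift map
    let ψ : MofSet A × MofSet B → MofSet A × MofSet B :=
      fun w => ⟨w.1, ⟨(w.2 : (Fin m → ℤ) × ℤ) + ((0 : Fin m → ℤ), (1 : ℤ)),
        add_mem w.2.2 (zero_one_mem h0B)⟩⟩
    have hψinj : Function.Injective ψ := by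
      intro w1 w2 hw
      have h1 : (ψ w1).1 = (ψ w2).1 := congrArg Prod.fst hw
      have h2 : ((ψ w1).2 : (Fin m → ℤ) × ℤ) = ((ψ w2).2 : (Fin m → ℤ) × ℤ) := by
        rw [hw]
      have h2' : (w1.2 : (Fin m → ℤ) × ℤ) + ((0 : Fin m → ℤ), (1 : ℤ))
          = (w2.2 : (Fin m → ℤ) × ℤ) + ((0 : Fin m → ℤ), (1 : ℤ)) := h2
      exact Prod.ext h1 (Subtype.ext (add_right_cancel h2'))
    -- maximal element
    obtain ⟨w', hw'mem, hmax⟩ := Set.exists_max_image (P g) F (key_fin g) ⟨w0, hw0⟩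
    have hnotB : ((w'.2 : (Fin m → ℤ) × ℤ) - ((0 : Fin m → ℤ), (1 : ℤ))) ∉ MofSet B := by
      intro hmem
      have hu1 : ((w'.1 : (Fin m → ℤ) × ℤ) + ((0 : Fin m → ℤ), (1 : ℤ))) ∈ MofSet A :=
        add_mem w'.1.2 (zero_one_mem h0A)
      have habel : ((w'.1 : (Fin m → ℤ) × ℤ) + ((0 : Fin m → ℤ), (1 : ℤ)))
          + ((w'.2 : (Fin m → ℤ) × ℤ) - ((0 : Fin m → ℤ), (1 : ℤ)))
          = (w'.1 : (Fin m → ℤ) × ℤ) + (w'.2 : (Fin m → ℤ) × ℤ) := by abel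
      have hmem2 : (⟨⟨_, hu1⟩, ⟨_, hmem⟩⟩ : MofSet A × MofSet B) ∈ P g := by
        show ((w'.1 : (Fin m → ℤ) × ℤ) + ((0 : Fin m → ℤ), (1 : ℤ)))
            + ((w'.2 : (Fin m → ℤ) × ℤ) - ((0 : Fin m → ℤ), (1 : ℤ))) = g
        rw [habel]; exact hw'mem
      have hle := hmax _ hmem2
      have : (w'.1 : (Fin m → ℤ) × ℤ).2 + 1 ≤ (w'.1 : (Fin m → ℤ) × ℤ).2 := hle
      omega
    -- the set equality
    have hseteq : P g = ψ '' P (g - ((0 : Fin m → ℤ), (1 : ℤ))) ∪ {w'} := by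
      ext w
      constructor
      · intro hw
        by_cases hcase : ((w.2 : (Fin m → ℤ) × ℤ) - ((0 : Fin m → ℤ), (1 : ℤ))) ∈ MofSet B
        · left
          refine ⟨⟨w.1, ⟨_, hcase⟩⟩, ?_, ?_⟩
          · show (w.1 : (Fin m → ℤ) × ℤ)
              + ((w.2 : (Fin m → ℤ) × ℤ) - ((0 : Fin m → ℤ), (1 : ℤ)))
              = g - ((0 : Fin m → ℤ), (1 : ℤ))
            have habel : (w.1 : (Fin m → ℤ) × ℤ)
                + ((w.2 : (Fin m → ℤ) × ℤ) - ((0 : Fin m → ℤ), (1 : ℤ)))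
                = ((w.1 : (Fin m → ℤ) × ℤ) + (w.2 : (Fin m → ℤ) × ℤ))
                  - ((0 : Fin m → ℤ), (1 : ℤ)) := by abel
            rw [habel, hw]
          · exact Prod.ext rfl (Subtype.ext (sub_add_cancel _ _))
        · right
          rw [Set.mem_singleton_iff]
          by_contra hne
          have hFne : F w ≠ F w' := fun hFe => hne (key_inj g hw hw'mem hFe)
          have hFlt : F w < F w' := lt_of_le_of_ne (hmax _ hw) hFne
          -- second coordinates of the B-parts
          have hsum : ((w.1 : (Fin m → ℤ) × ℤ) + (w.2 : (Fin m → ℤ) × ℤ))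
              = ((w'.1 : (Fin m → ℤ) × ℤ) + (w'.2 : (Fin m → ℤ) × ℤ)) :=
            hw.trans hw'mem.symm
          have hfst1 : (w.1 : (Fin m → ℤ) × ℤ).1 = (w'.1 : (Fin m → ℤ) × ℤ).1 :=
            fst_unique hspan' w.1.2 w'.1.2 w.2.2 w'.2.2 hsum
          have hsumfst : (w.1 : (Fin m → ℤ) × ℤ).1 + (w.2 : (Fin m → ℤ) × ℤ).1
              = (w'.1 : (Fin m → ℤ) × ℤ).1 + (w'.2 : (Fin m → ℤ) × ℤ).1 :=
            congrArg Prod.fst hsum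
          have hfst2 : (w.2 : (Fin m → ℤ) × ℤ).1 = (w'.2 : (Fin m → ℤ) × ℤ).1 := by
            rw [hfst1] at hsumfst; exact add_left_cancel hsumfst
          have hsumsnd : (w.1 : (Fin m → ℤ) × ℤ).2 + (w.2 : (Fin m → ℤ) × ℤ).2
              = (w'.1 : (Fin m → ℤ) × ℤ).2 + (w'.2 : (Fin m → ℤ) × ℤ).2 :=
            congrArg Prod.snd hsum
          set t : ℕ := (F w' - F w - 1).toNat with ht
          have hdec : (w.2 : (Fin m → ℤ) × ℤ) - ((0 : Fin m → ℤ), (1 : ℤ))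
              = (w'.2 : (Fin m → ℤ) × ℤ) + t • ((0 : Fin m → ℤ), (1 : ℤ)) := by
            apply Prod.ext
            · show (w.2 : (Fin m → ℤ) × ℤ).1 - 0
                = (w'.2 : (Fin m → ℤ) × ℤ).1 + t • (0 : Fin m → ℤ)
              rw [smul_zero, sub_zero, add_zero, hfst2]
            · show (w.2 : (Fin m → ℤ) × ℤ).2 - 1
                = (w'.2 : (Fin m → ℤ) × ℤ).2 + t • (1 : ℤ)
              have htv : (t : ℤ) = F w' - F w - 1 := by
                rw [ht]; exact Int.toNat_of_nonneg (by omega)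
              rw [nsmul_eq_mul, mul_one]
              show (w.2 : (Fin m → ℤ) × ℤ).2 - 1 = (w'.2 : (Fin m → ℤ) × ℤ).2 + (t : ℤ)
              rw [htv]
              show (w.2 : (Fin m → ℤ) × ℤ).2 - 1 = (w'.2 : (Fin m → ℤ) × ℤ).2
                + ((w'.1 : (Fin m → ℤ) × ℤ).2 - (w.1 : (Fin m → ℤ) × ℤ).2 - 1)
              omega
          have : ((w.2 : (Fin m → ℤ) × ℤ) - ((0 : Fin m → ℤ), (1 : ℤ))) ∈ MofSet B := by
            rw [hdec]
            exact add_mem w'.2.2 (AddSubmonoid.nsmul_mem _ (zero_one_mem h0B) t)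
          exact hcase this
      · rintro (⟨w2, hw2, rfl⟩ | hw)
        · show (w2.1 : (Fin m → ℤ) × ℤ)
            + ((w2.2 : (Fin m → ℤ) × ℤ) + ((0 : Fin m → ℤ), (1 : ℤ))) = g
          have habel : (w2.1 : (Fin m → ℤ) × ℤ)
              + ((w2.2 : (Fin m → ℤ) × ℤ) + ((0 : Fin m → ℤ), (1 : ℤ)))
              = ((w2.1 : (Fin m → ℤ) × ℤ) + (w2.2 : (Fin m → ℤ) × ℤ))
                + ((0 : Fin m → ℤ), (1 : ℤ)) := by abel
          rw [habel, hw2]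
          exact sub_add_cancel g _
        · rw [Set.mem_singleton_iff] at hw
          rw [hw]; exact hw'mem
    have hdisj : Disjoint (ψ '' P (g - ((0 : Fin m → ℤ), (1 : ℤ)))) ({w'} :
        Set (MofSet A × MofSet B)) := by
      rw [Set.disjoint_singleton_right]
      rintro ⟨w2, hw2, heq⟩
      apply hnotB
      have h2 : (w'.2 : (Fin m → ℤ) × ℤ)
          = (w2.2 : (Fin m → ℤ) × ℤ) + ((0 : Fin m → ℤ), (1 : ℤ)) := by
        rw [← heq]
      have : (w'.2 : (Fin m → ℤ) × ℤ) - ((0 : Fin m → ℤ), (1 : ℤ))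
          = (w2.2 : (Fin m → ℤ) × ℤ) := by rw [h2]; abel
      rw [this]; exact w2.2.2
    rw [hseteq, Set.ncard_union_eq hdisj ((key_fin _).image ψ) (Set.finite_singleton _),
      Set.ncard_image_of_injective _ hψinj, Set.ncard_singleton]
    omega
end

section
/- Let K be a field, M ⊆ ℤ^m an affine monoid, and let x, y ∈ M be noninvertible with x ≠ y such that X^x, X^y is a K[M]-sequence. Then for every z ∈ M the monomial X^z is a non-zerodivisor on the quotient ring K[M]/(X^x − X^y). -/
open AddMonoidAlgebra

section Aux

variable {m : ℕ} {K : Type*} [Field K] {M : AddSubmonoid (Fin m → ℤ)}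

open Classical in
/-- Coefficient of an element of the monoid algebra at an ambient lattice point. -/
noncomputable def coefAt (u : AddMonoidAlgebra K M) (s : Fin m → ℤ) : K :=
  if h : s ∈ M then u.coeff ⟨s, h⟩ else 0

lemma coefAt_mem (u : AddMonoidAlgebra K M) (s : Fin m → ℤ) (h : s ∈ M) :
    coefAt u s = u.coeff ⟨s, h⟩ := by
  rw [coefAt, dif_pos h]

lemma coefAt_not_mem (u : AddMonoidAlgebra K M) (s : Fin m → ℤ) (h : s ∉ M) :
    coefAt u s = 0 := by
  rw [coefAt, dif_neg h]

lemma coefAt_apply (u : AddMonoidAlgebra K M) (w : M) : coefAt u (w : Fin m → ℤ) = u.coeff w := by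
  rw [coefAt_mem u _ w.2]

lemma coefAt_ne_zero_mem {u : AddMonoidAlgebra K M} {s : Fin m → ℤ} (h : coefAt u s ≠ 0) :
    s ∈ M := by
  by_contra hs
  rw [coefAt_not_mem u s hs] at h
  exact h rfl

lemma coefAt_zero (s : Fin m → ℤ) : coefAt (0 : AddMonoidAlgebra K M) s = 0 := by
  by_cases h : s ∈ M
  · rw [coefAt_mem _ _ h]; rfl
  · rw [coefAt_not_mem _ _ h]

lemma coefAt_add (u v : AddMonoidAlgebra K M) (s : Fin m → ℤ) :
    coefAt (u + v) s = coefAt u s + coefAt v s := by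
  by_cases h : s ∈ M
  · rw [coefAt_mem _ _ h, coefAt_mem _ _ h, coefAt_mem _ _ h]; rfl
  · rw [coefAt_not_mem _ _ h, coefAt_not_mem _ _ h, coefAt_not_mem _ _ h, add_zero]

lemma coefAt_sub (u v : AddMonoidAlgebra K M) (s : Fin m → ℤ) :
    coefAt (u - v) s = coefAt u s - coefAt v s := by
  by_cases h : s ∈ M
  · rw [coefAt_mem _ _ h, coefAt_mem _ _ h, coefAt_mem _ _ h]; rfl
  · rw [coefAt_not_mem _ _ h, coefAt_not_mem _ _ h, coefAt_not_mem _ _ h, sub_zero]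

lemma coefAt_single (w : M) (c : K) (s : Fin m → ℤ) :
    coefAt (single w c : AddMonoidAlgebra K M) s = if s = (w : Fin m → ℤ) then c else 0 := by
  by_cases h : s ∈ M
  · rw [coefAt_mem _ _ h]
    show (Finsupp.single w c) ⟨s, h⟩ = _
    rw [Finsupp.single_apply]
    have hiff : (w = (⟨s, h⟩ : M)) ↔ (s = (w : Fin m → ℤ)) := by
      constructor
      · intro he; exact (congrArg Subtype.val he).symm
      · intro he; exact Subtype.ext he.symm
    rw [if_congr hiff rfl rfl]
  · rw [coefAt_not_mem _ _ h, if_neg]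
    intro he; exact h (he ▸ w.2)

lemma coefAt_ext {u v : AddMonoidAlgebra K M}
    (h : ∀ s : Fin m → ℤ, coefAt u s = coefAt v s) : u = v := by
  apply AddMonoidAlgebra.ext
  apply Finsupp.ext
  intro w
  have hw := h (w : Fin m → ℤ)
  rwa [coefAt_apply, coefAt_apply] at hw

lemma coefAt_single_mul (w : M) (c : K) (v : AddMonoidAlgebra K M) (s : Fin m → ℤ) :
    coefAt (single w c * v) s = c * coefAt v (s - (w : Fin m → ℤ)) := by
  induction v using AddMonoidAlgebra.induction with
  | zero =>
    rw [mul_zero, coefAt_zero, coefAt_zero, mul_zero]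
  | single_add a b f ha hb ih =>
    rw [mul_add, coefAt_add, coefAt_add, ih, single_mul_single, mul_add]
    congr 1
    rw [coefAt_single, coefAt_single]
    have hiff : (s = ((w + a : M) : Fin m → ℤ)) ↔ (s - (w : Fin m → ℤ) = (a : Fin m → ℤ)) := by
      rw [AddSubmonoid.coe_add, sub_eq_iff_eq_add']
    rw [if_congr hiff rfl rfl]
    split
    · rfl
    · rw [mul_zero]

end Aux

section Aux2

variable {m : ℕ} {M : AddSubmonoid (Fin m → ℤ)}

lemma interval_mem {xa ya : Fin m → ℤ} (hxm : xa ∈ M) (hym : ya ∈ M)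
    (hH : ∀ s : Fin m → ℤ, s ∈ M → s - (xa - ya) ∈ M → s - xa ∈ M) :
    ∀ N : ℕ, ∀ W : Fin m → ℤ, W ∈ M → W + (N : ℤ) • (xa - ya) ∈ M →
      ∀ j : ℕ, j ≤ N → W + (j : ℤ) • (xa - ya) ∈ M := by
  intro N
  induction N using Nat.strong_induction_on with
  | _ N IH =>
    intro W hW hWN j hjN
    rcases Nat.eq_zero_or_pos j with hj0 | hj1
    · subst hj0; simpa using hW
    rcases eq_or_lt_of_le hjN with hjN' | hjN'
    · subst hjN'; exact hWN
    have hN1 : 1 ≤ N := le_trans hj1 (le_of_lt hjN')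
    have base : ∀ i : ℕ, i ≤ N - 1 → (W + xa) + (i : ℤ) • (xa - ya) ∈ M := by
      intro i hi
      refine IH (N-1) (by omega) (W + xa) (M.add_mem hW hxm) ?_ i hi
      have hcast : ((N - 1 : ℕ) : ℤ) = (N : ℤ) - 1 := by omega
      rw [hcast]
      have he : W + xa + ((N:ℤ) - 1) • (xa - ya) = (W + (N:ℤ) • (xa - ya)) + ya := by module
      rw [he]
      exact M.add_mem hWN hym
    have hj' : j ≤ N - 1 := by omega
    have hs := base j hj'
    have hs' := base (j-1) (by omega)
    have hd : (W + xa + (j:ℤ) • (xa - ya)) - (xa - ya)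
        = (W + xa) + ((j-1:ℕ):ℤ) • (xa - ya) := by
      have hc : ((j - 1:ℕ):ℤ) = (j:ℤ) - 1 := by omega
      rw [hc]; module
    have hcon := hH _ hs (by rw [hd]; exact hs')
    have hfin : W + xa + (j:ℤ) • (xa - ya) - xa = W + (j:ℤ) • (xa - ya) := by module
    rwa [hfin] at hcon

end Aux2

/-- **(From the proof of Theorem 2.1.)** Let `K` be a field, `M ⊆ ℤ^m` an affine monoid,
and `x ≠ y` noninvertible elements of `M` such that `X^x, X^y` is a `K[M]`-sequence.
Then no monomial `X^z`, `z ∈ M`, is a zerodivisor on `K[M]/(X^x − X^y)`. -/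
theorem monomial_nonzerodivisor_mod_binomial {m : ℕ} (K : Type*) [Field K]
    (M : AddSubmonoid (Fin m → ℤ)) (hMfg : M.FG)
    (x y : M) (hx : -(x : Fin m → ℤ) ∉ M) (hy : -(y : Fin m → ℤ) ∉ M) (hxy : x ≠ y)
    (hreg : IsRegSeq [(single x 1 : AddMonoidAlgebra K M), single y 1]) :
    ∀ z : M, ∀ r : AddMonoidAlgebra K M ⧸
        Ideal.span {(single x 1 : AddMonoidAlgebra K M) - single y 1},
      Ideal.Quotient.mk (Ideal.span {(single x 1 : AddMonoidAlgebra K M) - single y 1})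
          (single z 1) * r = 0 → r = 0 := by
  classical
  intro z r hzr
  obtain ⟨u, rfl⟩ := Ideal.Quotient.mk_surjective r
  rw [← map_mul, Ideal.Quotient.eq_zero_iff_mem] at hzr
  rw [Ideal.Quotient.eq_zero_iff_mem]
  -- the regularity hypothesis, combinatorially
  have hreg2 : ∀ r : AddMonoidAlgebra K M,
      single y 1 * r ∈ Ideal.span {(single x 1 : AddMonoidAlgebra K M)} →
      r ∈ Ideal.span {(single x 1 : AddMonoidAlgebra K M)} := by
    have h := hreg.2 ⟨1, by norm_num⟩
    simpa using h
  have hH : ∀ s : Fin m → ℤ, s ∈ M → s - ((x : Fin m → ℤ) - (y : Fin m → ℤ)) ∈ M →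
      s - (x : Fin m → ℤ) ∈ M := by
    intro s hs hsd
    have h1 : single y (1:K) * single ⟨s, hs⟩ 1 ∈
        Ideal.span {(single x 1 : AddMonoidAlgebra K M)} := by
      rw [Ideal.mem_span_singleton]
      refine ⟨single ⟨s - ((x : Fin m → ℤ) - (y : Fin m → ℤ)), hsd⟩ 1, ?_⟩
      rw [single_mul_single, single_mul_single, mul_one]
      congr 1
      apply Subtype.ext
      show (y : Fin m → ℤ) + s
        = (x : Fin m → ℤ) + (s - ((x : Fin m → ℤ) - (y : Fin m → ℤ)))
      ring
    have h2 := hreg2 _ h1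
    rw [Ideal.mem_span_singleton] at h2
    obtain ⟨t, ht⟩ := h2
    have h3 := congrArg (fun w => coefAt w s) ht
    simp only [coefAt_single, if_pos rfl, coefAt_single_mul, one_mul] at h3
    refine coefAt_ne_zero_mem (u := t) (s := s - (x : Fin m → ℤ)) ?_
    rw [← h3]
    exact one_ne_zero
  rw [Ideal.mem_span_singleton] at hzr ⊢
  obtain ⟨v, hv⟩ := hzr
  have hdne : ((x : Fin m → ℤ) - (y : Fin m → ℤ)) ≠ 0 :=
    sub_ne_zero.mpr (fun h => hxy (Subtype.ext h))
  -- every exponent in the support of `v` is divisible by `z`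
  have div : ∀ p ∈ v.coeff.support, ((p : Fin m → ℤ) - (z : Fin m → ℤ)) ∈ M := by
    intro p hp
    set pv : Fin m → ℤ := (p : Fin m → ℤ) with hpv
    set b : ℤ → K := fun k => coefAt v (pv + k • ((x : Fin m → ℤ) - (y : Fin m → ℤ))) with hb
    have hb0 : b 0 ≠ 0 := by
      rw [hb]
      simp only [zero_smul, add_zero]
      rw [hpv, coefAt_apply]
      exact Finsupp.mem_support_iff.mp hp
    have hab : ∀ k : ℤ,
        coefAt u (pv + (x : Fin m → ℤ) - (z : Fin m → ℤ)
          + k • ((x : Fin m → ℤ) - (y : Fin m → ℤ))) = b k - b (k+1) := by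
      intro k
      have h1 := congrArg
        (fun w => coefAt w (pv + (x : Fin m → ℤ)
          + k • ((x : Fin m → ℤ) - (y : Fin m → ℤ)))) hv
      simp only [sub_mul, coefAt_sub, coefAt_single_mul, one_mul] at h1
      have e1 : pv + (x : Fin m → ℤ) + k • ((x : Fin m → ℤ) - (y : Fin m → ℤ))
          - (z : Fin m → ℤ)
          = pv + (x : Fin m → ℤ) - (z : Fin m → ℤ)
            + k • ((x : Fin m → ℤ) - (y : Fin m → ℤ)) := by module
      have e2 : pv + (x : Fin m → ℤ) + k • ((x : Fin m → ℤ) - (y : Fin m → ℤ))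
          - (x : Fin m → ℤ) = pv + k • ((x : Fin m → ℤ) - (y : Fin m → ℤ)) := by module
      have e3 : pv + (x : Fin m → ℤ) + k • ((x : Fin m → ℤ) - (y : Fin m → ℤ))
          - (y : Fin m → ℤ) = pv + (k+1) • ((x : Fin m → ℤ) - (y : Fin m → ℤ)) := by module
      rw [e1, e2, e3] at h1
      exact h1
    have hinj : Function.Injective
        (fun k : ℤ => pv + k • ((x : Fin m → ℤ) - (y : Fin m → ℤ))) := by
      intro a b hab'
      have h2 : a • ((x : Fin m → ℤ) - (y : Fin m → ℤ))
          = b • ((x : Fin m → ℤ) - (y : Fin m → ℤ)) := add_left_cancel hab'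
      exact smul_left_injective ℤ hdne h2
    have hTsub : {k : ℤ | b k ≠ 0} ⊆
        (fun k : ℤ => pv + k • ((x : Fin m → ℤ) - (y : Fin m → ℤ))) ⁻¹'
          ((fun w : M => (w : Fin m → ℤ)) '' (v.coeff.support : Set M)) := by
      intro k hk
      have hk' : coefAt v (pv + k • ((x : Fin m → ℤ) - (y : Fin m → ℤ))) ≠ 0 := hk
      have hmem := coefAt_ne_zero_mem hk'
      refine ⟨⟨pv + k • ((x : Fin m → ℤ) - (y : Fin m → ℤ)), hmem⟩, ?_, rfl⟩
      rw [Finset.mem_coe, Finsupp.mem_support_iff]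
      rwa [coefAt_mem _ _ hmem] at hk'
    have hTfin : {k : ℤ | b k ≠ 0}.Finite :=
      Set.Finite.subset
        (Set.Finite.preimage hinj.injOn (Set.Finite.image _ v.coeff.support.finite_toSet)) hTsub
    have h0T : (0:ℤ) ∈ hTfin.toFinset := by rw [Set.Finite.mem_toFinset]; exact hb0
    have hTne : hTfin.toFinset.Nonempty := ⟨0, h0T⟩
    set k0 := hTfin.toFinset.min' hTne with hk0def
    set k1 := hTfin.toFinset.max' hTne with hk1def
    have hk00 : k0 ≤ 0 := Finset.min'_le _ 0 h0T
    have h0k1 : 0 ≤ k1 := Finset.le_max' _ 0 h0T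
    have hbk0 : b k0 ≠ 0 := (Set.Finite.mem_toFinset hTfin).mp (Finset.min'_mem _ hTne)
    have hbk1 : b k1 ≠ 0 := (Set.Finite.mem_toFinset hTfin).mp (Finset.max'_mem _ hTne)
    have hbk0m : b (k0 - 1) = 0 := by
      by_contra hc
      have hmem : k0 - 1 ∈ hTfin.toFinset := (Set.Finite.mem_toFinset hTfin).mpr hc
      have := Finset.min'_le _ _ hmem
      omega
    have hbk1p : b (k1 + 1) = 0 := by
      by_contra hc
      have hmem : k1 + 1 ∈ hTfin.toFinset := (Set.Finite.mem_toFinset hTfin).mpr hc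
      have := Finset.le_max' _ _ hmem
      omega
    have haW : coefAt u (pv + (x : Fin m → ℤ) - (z : Fin m → ℤ)
        + (k0-1) • ((x : Fin m → ℤ) - (y : Fin m → ℤ))) ≠ 0 := by
      have e : k0 - 1 + 1 = k0 := by ring
      rw [hab, e, hbk0m, zero_sub]
      exact neg_ne_zero.mpr hbk0
    have haW' : coefAt u (pv + (x : Fin m → ℤ) - (z : Fin m → ℤ)
        + k1 • ((x : Fin m → ℤ) - (y : Fin m → ℤ))) ≠ 0 := by
      rw [hab, hbk1p, sub_zero]
      exact hbk1
    have hW : pv + (x : Fin m → ℤ) - (z : Fin m → ℤ)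
        + (k0-1) • ((x : Fin m → ℤ) - (y : Fin m → ℤ)) ∈ M := coefAt_ne_zero_mem haW
    have hWN' : pv + (x : Fin m → ℤ) - (z : Fin m → ℤ)
        + k1 • ((x : Fin m → ℤ) - (y : Fin m → ℤ)) ∈ M := coefAt_ne_zero_mem haW'
    have hNc : (((k1 - k0 + 1).toNat : ℕ) : ℤ) = k1 - k0 + 1 := Int.toNat_of_nonneg (by omega)
    have hWN : (pv + (x : Fin m → ℤ) - (z : Fin m → ℤ)
        + (k0-1) • ((x : Fin m → ℤ) - (y : Fin m → ℤ)))
        + (((k1 - k0 + 1).toNat : ℕ) : ℤ) • ((x : Fin m → ℤ) - (y : Fin m → ℤ)) ∈ M := by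
      have e : (pv + (x : Fin m → ℤ) - (z : Fin m → ℤ)
          + (k0-1) • ((x : Fin m → ℤ) - (y : Fin m → ℤ)))
          + (k1 - k0 + 1) • ((x : Fin m → ℤ) - (y : Fin m → ℤ))
          = pv + (x : Fin m → ℤ) - (z : Fin m → ℤ)
            + k1 • ((x : Fin m → ℤ) - (y : Fin m → ℤ)) := by module
      rw [hNc, e]
      exact hWN'
    have hall := interval_mem x.2 y.2 hH ((k1 - k0 + 1).toNat) _ hW hWN
    have hjc : (((1 - k0).toNat : ℕ) : ℤ) = 1 - k0 := Int.toNat_of_nonneg (by omega)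
    have hjN : (1 - k0).toNat ≤ (k1 - k0 + 1).toNat := by omega
    have hj1 : 1 ≤ (1 - k0).toNat := by omega
    have hsj := hall ((1 - k0).toNat) hjN
    have hsj' := hall ((1 - k0).toNat - 1) (by omega)
    have hd2 : (pv + (x : Fin m → ℤ) - (z : Fin m → ℤ)
          + (k0-1) • ((x : Fin m → ℤ) - (y : Fin m → ℤ)))
          + (((1 - k0).toNat : ℕ) : ℤ) • ((x : Fin m → ℤ) - (y : Fin m → ℤ))
          - ((x : Fin m → ℤ) - (y : Fin m → ℤ))
        = (pv + (x : Fin m → ℤ) - (z : Fin m → ℤ)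
          + (k0-1) • ((x : Fin m → ℤ) - (y : Fin m → ℤ)))
          + ((((1 - k0).toNat - 1 : ℕ)) : ℤ) • ((x : Fin m → ℤ) - (y : Fin m → ℤ)) := by
      have ec : ((((1 - k0).toNat - 1 : ℕ)) : ℤ) = (((1 - k0).toNat : ℕ) : ℤ) - 1 := by omega
      rw [ec]; module
    have hcon := hH _ hsj (by rw [hd2]; exact hsj')
    have e2 : (pv + (x : Fin m → ℤ) - (z : Fin m → ℤ)
          + (k0-1) • ((x : Fin m → ℤ) - (y : Fin m → ℤ)))
          + (((1 - k0).toNat : ℕ) : ℤ) • ((x : Fin m → ℤ) - (y : Fin m → ℤ))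
          - (x : Fin m → ℤ) = pv - (z : Fin m → ℤ) := by
      rw [hjc]; module
    rwa [e2] at hcon
  -- build the cofactor and cancel the monomial
  set t : AddMonoidAlgebra K M := v.coeff.support.attach.sum
      (fun p => single (⟨(p.1 : Fin m → ℤ) - (z : Fin m → ℤ), div p.1 p.2⟩ : M) (v.coeff p.1))
    with ht
  have hvt : single z (1:K) * t = v := by
    rw [ht, Finset.mul_sum]
    have hterm : ∀ p : {p // p ∈ v.coeff.support},
        single z (1:K) * single
          (⟨(p.1 : Fin m → ℤ) - (z : Fin m → ℤ), div p.1 p.2⟩ : M) (v.coeff p.1)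
          = single p.1 (v.coeff p.1) := by
      intro p
      rw [single_mul_single, one_mul]
      congr 1
      apply Subtype.ext
      show (z : Fin m → ℤ) + ((p.1 : Fin m → ℤ) - (z : Fin m → ℤ)) = (p.1 : Fin m → ℤ)
      ring
    rw [Finset.sum_congr rfl (fun p _ => hterm p)]
    rw [Finset.sum_attach v.coeff.support (fun p => single p (v.coeff p))]
    exact AddMonoidAlgebra.sum_coeff_single v
  refine ⟨t, ?_⟩
  have h4 : single z (1:K) * u
      = single z 1 * ((single x 1 - single y 1) * t) := by
    rw [hv, ← hvt]; ring
  apply coefAt_ext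
  intro s
  have h5 := congrArg (fun w => coefAt w ((z : Fin m → ℤ) + s)) h4
  simp only [coefAt_single_mul, one_mul] at h5
  rwa [add_sub_cancel_left] at h5
end
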